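/- arXiv:1801.02876 — 6 statements merged into one kernel-verified Lean document; each statement's English description precedes it below -/
import Mathlib

section
/- Let X be a random variable on a countably infinite alphabet X and Y a random variable such that the decreasing rearrangement P_{X|Y}↓ of the regular conditional distribution of X given Y is almost surely equal to a fixed distribution R. Then R majorizes the marginal distribution P_X, i.e., ∑_{x=1}^k P_X↓(x) ≤ ∑_{x=1}^k R(x) for every k ≥ 1. -/
noncomputable section

def IsPmf {α : Type*} (p : α → ℝ) : Prop := (∀ x, 0 ≤ p x) ∧ ∑' x, p x = 1

def topSum (p : ℕ → ℝ) (k : ℕ) : ℝ :=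
  sSup {t : ℝ | ∃ s : Finset ℕ, s.card = k ∧ t = ∑ x ∈ s, p x}

lemma summable_of_pmf {α : Type*} {p : α → ℝ} (hp : IsPmf p) : Summable p := by
  by_contra h
  have := hp.2
  rw [tsum_eq_zero_of_not_summable h] at this
  exact one_ne_zero this.symm

/-- If the decreasing rearrangement of the conditional distribution `P_{X|Y}`
is almost surely equal to a fixed (decreasing) distribution `R` — expressed by
requiring that for every `y` of positive probability the top-`k` sums of
`P_{X|Y=y}` equal the first `k` masses of `R` — then `R` majorizes the marginal
`P_X`: `∑_{x=1}^k P_X↓(x) ≤ ∑_{x=1}^k R(x)` for all `k`. -/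
theorem stmt_4 {β : Type*} (q : β → ℝ) (W : β → ℕ → ℝ) (R : ℕ → ℝ)
    (hq : IsPmf q) (hW : ∀ y, IsPmf (W y)) (hR : IsPmf R) (hRanti : Antitone R)
    (hconst : ∀ y, q y ≠ 0 → ∀ k, topSum (W y) k = ∑ i ∈ Finset.range k, R i) :
    ∀ k, topSum (fun x => ∑' y, q y * W y x) k ≤ ∑ i ∈ Finset.range k, R i := by
  intro k
  set C : ℝ := ∑ i ∈ Finset.range k, R i with hC
  have hqs : Summable q := summable_of_pmf hq
  have hWs : ∀ y, Summable (W y) := fun y => summable_of_pmf (hW y)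
  have hWle1 : ∀ y x, W y x ≤ 1 := fun y x => by
    have := Summable.le_tsum (hWs y) x (fun b _ => (hW y).1 b)
    simpa [(hW y).2] using this
  have hCnn : 0 ≤ C := Finset.sum_nonneg fun i _ => hR.1 i
  -- summability of terms per x
  have hsum_x : ∀ x, Summable (fun y => q y * W y x) := by
    intro x
    refine Summable.of_nonneg_of_le (fun y => mul_nonneg (hq.1 y) ((hW y).1 x)) ?_ hqs
    intro y
    calc q y * W y x ≤ q y * 1 := mul_le_mul_of_nonneg_left (hWle1 y x) (hq.1 y)
    _ = q y := mul_one _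
  -- key bound on partial sums of W y
  have hWsum : ∀ y (s : Finset ℕ), s.card = k → q y ≠ 0 → ∑ x ∈ s, W y x ≤ C := by
    intro y s hs hy
    have hbdd : BddAbove {t : ℝ | ∃ s : Finset ℕ, s.card = k ∧ t = ∑ x ∈ s, W y x} := by
      refine ⟨1, ?_⟩
      rintro t ⟨u, hu, rfl⟩
      have := Summable.sum_le_tsum u (fun b _ => (hW y).1 b) (hWs y)
      simpa [(hW y).2] using this
    have hmem : (∑ x ∈ s, W y x) ∈ {t : ℝ | ∃ s : Finset ℕ, s.card = k ∧ t = ∑ x ∈ s, W y x} :=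
      ⟨s, hs, rfl⟩
    have := le_csSup hbdd hmem
    calc ∑ x ∈ s, W y x ≤ topSum (W y) k := this
    _ = C := hconst y hy k
  -- now bound sSup
  apply csSup_le
  · exact ⟨∑ x ∈ Finset.range k, ∑' y, q y * W y x, Finset.range k, Finset.card_range k, rfl⟩
  rintro t ⟨s, hs, rfl⟩
  have hswap : ∑ x ∈ s, ∑' y, q y * W y x = ∑' y, ∑ x ∈ s, q y * W y x :=
    (Summable.tsum_finsetSum (fun x _ => hsum_x x)).symm
  rw [hswap]
  have hle : ∀ y, ∑ x ∈ s, q y * W y x ≤ q y * C := by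
    intro y
    rw [← Finset.mul_sum]
    by_cases hy : q y = 0
    · simp [hy, hCnn]
    · exact mul_le_mul_of_nonneg_left (hWsum y s hs hy) (hq.1 y)
  have hLHSsum : Summable (fun y => ∑ x ∈ s, q y * W y x) := by
    refine Summable.of_nonneg_of_le
      (fun y => Finset.sum_nonneg fun x _ => mul_nonneg (hq.1 y) ((hW y).1 x)) ?_ hqs
    intro y
    rw [← Finset.mul_sum]
    calc q y * ∑ x ∈ s, W y x ≤ q y * 1 := by
          refine mul_le_mul_of_nonneg_left ?_ (hq.1 y)
          have := Summable.sum_le_tsum s (fun b _ => (hW y).1 b) (hWs y)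
          simpa [(hW y).2] using this
    _ = q y := mul_one _
  calc ∑' y, ∑ x ∈ s, q y * W y x ≤ ∑' y, q y * C :=
        Summable.tsum_le_tsum hle hLHSsum (hqs.mul_right C)
  _ = (∑' y, q y) * C := tsum_mul_right
  _ = C := by rw [hq.2, one_mul]
end
end

section
/- Let Q be a probability distribution on the countably infinite alphabet X, L ≥ 1 an integer, and 0 ≤ ε ≤ 1 − ∑_{x=1}^L Q↓(x). Define the Fano-type-1 distribution P₁ from (Q, L, ε) as in the context. Then for every probability distribution R on X such that R majorizes Q and 1 − ∑_{x=1}^L R↓(x) ≤ ε, R also majorizes P₁. -/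
noncomputable section
open scoped Classical

/-- `d` is the decreasing rearrangement of `p` (indexed from `1`):
`d` is nonincreasing on `{1,2,...}`, vanishes at the unused index `0`, and its
partial sums are the top-`k` sums of `p`. -/
def IsDecRearr (p d : ℕ → ℝ) : Prop :=
  d 0 = 0 ∧ (∀ i j, 1 ≤ i → i ≤ j → d j ≤ d i) ∧
    ∀ k, ∑ i ∈ Finset.Icc 1 k, d i = topSum p k

/-- The weight `V(j)` of the Fano-type-1 distribution. -/
def fanoV (d : ℕ → ℝ) (L : ℕ) (ε : ℝ) (j : ℕ) : ℝ :=
  if j ≤ L then ((1 - ε) - ∑ i ∈ Finset.Icc 1 (j - 1), d i) / ((L : ℝ) - j + 1) else 1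

/-- The weight `W(k)` of the Fano-type-1 distribution (for finite `k`). -/
def fanoW (d : ℕ → ℝ) (L : ℕ) (ε : ℝ) (k : ℕ) : ℝ :=
  if k = L then -1 else ((∑ i ∈ Finset.Icc 1 k, d i) - (1 - ε)) / ((k : ℝ) - L)

/-- `J := min{1 ≤ j < ∞ | Q↓(j) < V(j)}`. -/
def fanoJ (d : ℕ → ℝ) (L : ℕ) (ε : ℝ) : ℕ :=
  sInf {j : ℕ | 1 ≤ j ∧ d j < fanoV d L ε j}

/-- `K₁ := sup{L ≤ k < ∞ | W(k) < Q↓(k)}`, an extended natural number. -/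
def fanoK (d : ℕ → ℝ) (L : ℕ) (ε : ℝ) : ℕ∞ :=
  sSup {k : ℕ∞ | ∃ n : ℕ, k = (n : ℕ∞) ∧ L ≤ n ∧ fanoW d L ε n < d n}

/-- The Fano-type-1 distribution built from the decreasing rearrangement `d` of
`Q`, list size `L` and error level `ε` (with `W(∞) = 0`). -/
def fanoType1 (d : ℕ → ℝ) (L : ℕ) (ε : ℝ) (x : ℕ) : ℝ :=
  if x < fanoJ d L ε then d x
  else if x ≤ L then fanoV d L ε (fanoJ d L ε)
  else if (x : ℕ∞) ≤ fanoK d L ε then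
    (if fanoK d L ε = ⊤ then 0 else fanoW d L ε (fanoK d L ε).toNat)
  else d x

namespace FanoAux

lemma ts_nonempty (p : ℕ → ℝ) (k : ℕ) :
    {t : ℝ | ∃ s : Finset ℕ, s.card = k ∧ t = ∑ x ∈ s, p x}.Nonempty :=
  ⟨∑ x ∈ Finset.Icc 1 k, p x, Finset.Icc 1 k, by rw [Nat.card_Icc]; omega, rfl⟩

lemma pmf_summable {p : ℕ → ℝ} (hp : IsPmf p) : Summable p := by
  by_contra h
  have := tsum_eq_zero_of_not_summable h
  rw [hp.2] at this; norm_num at this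

lemma pmf_sum_le_one {p : ℕ → ℝ} (hp : IsPmf p) (s : Finset ℕ) : ∑ x ∈ s, p x ≤ 1 := by
  rw [← hp.2]
  exact Summable.sum_le_tsum s (fun i _ => hp.1 i) (pmf_summable hp)

lemma ts_bdd {p : ℕ → ℝ} (hp : IsPmf p) (k : ℕ) :
    BddAbove {t : ℝ | ∃ s : Finset ℕ, s.card = k ∧ t = ∑ x ∈ s, p x} := by
  refine ⟨1, fun t ht => ?_⟩
  obtain ⟨s, _, rfl⟩ := ht
  exact pmf_sum_le_one hp s

lemma ts_le {p : ℕ → ℝ} (hp : IsPmf p) (s : Finset ℕ) : ∑ x ∈ s, p x ≤ topSum p s.card :=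
  le_csSup (ts_bdd hp _) ⟨s, rfl, rfl⟩

lemma ts_le' {p : ℕ → ℝ} (hp : IsPmf p) {s : Finset ℕ} {k : ℕ} (h : s.card = k) :
    ∑ x ∈ s, p x ≤ topSum p k := h ▸ ts_le hp s

lemma ts_csSup_le {p : ℕ → ℝ} {k : ℕ} {c : ℝ}
    (h : ∀ s : Finset ℕ, s.card = k → ∑ x ∈ s, p x ≤ c) : topSum p k ≤ c := by
  refine csSup_le (ts_nonempty p k) ?_
  rintro t ⟨s, hs, rfl⟩
  exact h s hs

lemma ts_le_one {p : ℕ → ℝ} (hp : IsPmf p) (k : ℕ) : topSum p k ≤ 1 :=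
  ts_csSup_le fun s _ => pmf_sum_le_one hp s

lemma ts_zero (p : ℕ → ℝ) : topSum p 0 = 0 := by
  have : {t : ℝ | ∃ s : Finset ℕ, s.card = 0 ∧ t = ∑ x ∈ s, p x} = {0} := by
    ext t
    simp only [Set.mem_setOf_eq, Set.mem_singleton_iff, Finset.card_eq_zero]
    constructor
    · rintro ⟨s, rfl, rfl⟩; simp
    · rintro rfl; exact ⟨∅, rfl, by simp⟩
  rw [topSum, this, csSup_singleton]

lemma ts_mono {p : ℕ → ℝ} (hp : IsPmf p) : Monotone (topSum p) := by
  intro k m hkm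
  refine ts_csSup_le fun s hs => ?_
  obtain ⟨t, hst, htc⟩ := Infinite.exists_superset_card_eq s m (by omega)
  calc ∑ x ∈ s, p x ≤ ∑ x ∈ t, p x :=
        Finset.sum_le_sum_of_subset_of_nonneg hst (fun i _ _ => hp.1 i)
    _ ≤ topSum p m := ts_le' hp htc

lemma ts_concave2 {p : ℕ → ℝ} (hp : IsPmf p) (k : ℕ) :
    topSum p k + topSum p (k + 2) ≤ 2 * topSum p (k + 1) := by
  have key : ∀ s t : Finset ℕ, s.card = k → t.card = k + 2 →
      ∑ x ∈ s, p x + ∑ x ∈ t, p x ≤ 2 * topSum p (k + 1) := by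
    intro s t hs ht
    classical
    have hIU : (s ∩ t).card + (s ∪ t).card = 2 * k + 2 := by
      rw [add_comm, Finset.card_union_add_card_inter, hs, ht]; ring
    have hIle : (s ∩ t).card ≤ k := by
      have : (s ∩ t).card ≤ s.card := Finset.card_le_card Finset.inter_subset_left
      omega
    have hsub : (s ∩ t) ⊆ (s ∪ t) := (Finset.inter_subset_left).trans Finset.subset_union_left
    have hcardsdiff : ((s ∪ t) \ (s ∩ t)).card = 2 * k + 2 - 2 * (s ∩ t).card := by
      rw [Finset.card_sdiff_of_subset hsub]; omega
    obtain ⟨A, hA, hAc⟩ : ∃ A ⊆ (s ∪ t) \ (s ∩ t), A.card = k + 1 - (s ∩ t).card :=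
      Finset.exists_subset_card_eq (by omega)
    have hdisj : Disjoint (s ∩ t) A := by
      refine Finset.disjoint_left.2 fun a ha haA => ?_
      exact (Finset.mem_sdiff.1 (hA haA)).2 ha
    have hBc : ((s ∩ t) ∪ A).card = k + 1 := by
      rw [Finset.card_union_of_disjoint hdisj, hAc]; omega
    have hAsub : A ⊆ s ∪ t := hA.trans (Finset.sdiff_subset)
    have hCc : ((s ∪ t) \ A).card = k + 1 := by
      rw [Finset.card_sdiff_of_subset hAsub, hAc]; omega
    have hsum : ∑ x ∈ s, p x + ∑ x ∈ t, p x
        = ∑ x ∈ (s ∩ t) ∪ A, p x + ∑ x ∈ (s ∪ t) \ A, p x := by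
      rw [Finset.sum_union hdisj]
      have h1 : ∑ x ∈ (s ∪ t) \ A, p x = ∑ x ∈ s ∪ t, p x - ∑ x ∈ A, p x := by
        rw [Finset.sum_sdiff_eq_sub hAsub]
      have h2 : ∑ x ∈ s ∪ t, p x + ∑ x ∈ s ∩ t, p x = ∑ x ∈ s, p x + ∑ x ∈ t, p x :=
        Finset.sum_union_inter
      linarith
    rw [hsum, two_mul]
    exact add_le_add (ts_le' hp hBc) (ts_le' hp hCc)
  have h : topSum p k ≤ 2 * topSum p (k + 1) - topSum p (k + 2) := by
    refine ts_csSup_le fun s hs => ?_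
    have h2 : topSum p (k + 2) ≤ 2 * topSum p (k + 1) - ∑ x ∈ s, p x := by
      refine ts_csSup_le fun t ht => ?_
      have := key s t hs ht; linarith
    linarith
  linarith

lemma ts_incr_antitone {p : ℕ → ℝ} (hp : IsPmf p) :
    Antitone (fun n => topSum p (n + 1) - topSum p n) := by
  refine antitone_nat_of_succ_le fun n => ?_
  have := ts_concave2 hp n
  show topSum p (n + 1 + 1) - topSum p (n + 1) ≤ topSum p (n + 1) - topSum p n
  linarith

lemma ts_concave {p : ℕ → ℝ} (hp : IsPmf p) {a k b : ℕ} (hak : a ≤ k) (hkb : k ≤ b) :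
    ((b : ℝ) - k) * topSum p a + ((k : ℝ) - a) * topSum p b
      ≤ ((b : ℝ) - a) * topSum p k := by
  rcases eq_or_lt_of_le hak with rfl | hak'
  · ring_nf; rfl
  rcases eq_or_lt_of_le hkb with rfl | hkb'
  · ring_nf; rfl
  set u : ℕ → ℝ := fun n => topSum p (n + 1) - topSum p n with hu
  have tele : ∀ m n : ℕ, m ≤ n → topSum p n - topSum p m = ∑ i ∈ Finset.Ico m n, u i := by
    intro m n hmn
    rw [Finset.sum_Ico_eq_sub _ hmn]
    have e : ∀ j : ℕ, ∑ i ∈ Finset.range j, u i = topSum p j - topSum p 0 :=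
      fun j => Finset.sum_range_sub (fun n => topSum p n) j
    rw [e, e]; ring
  have h1 : topSum p k - topSum p a ≥ ((k : ℝ) - a) * u (k - 1) := by
    rw [tele a k hak]
    calc ∑ i ∈ Finset.Ico a k, u i ≥ ∑ _i ∈ Finset.Ico a k, u (k - 1) := by
          refine Finset.sum_le_sum fun i hi => ?_
          exact ts_incr_antitone hp (by have := (Finset.mem_Ico.1 hi).2; omega)
      _ = ((k : ℝ) - a) * u (k - 1) := by
          rw [Finset.sum_const, Nat.card_Ico, nsmul_eq_mul, Nat.cast_sub hak]
  have h2 : topSum p b - topSum p k ≤ ((b : ℝ) - k) * u (k - 1) := by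
    rw [tele k b hkb]
    calc ∑ i ∈ Finset.Ico k b, u i ≤ ∑ _i ∈ Finset.Ico k b, u (k - 1) := by
          refine Finset.sum_le_sum fun i hi => ?_
          exact ts_incr_antitone hp (by have := (Finset.mem_Ico.1 hi).1; omega)
      _ = ((b : ℝ) - k) * u (k - 1) := by
          rw [Finset.sum_const, Nat.card_Ico, nsmul_eq_mul, Nat.cast_sub hkb]
  have hbk : (0:ℝ) ≤ (b:ℝ) - k := by
    have : (k:ℝ) ≤ b := Nat.cast_le.2 hkb
    linarith
  have hka : (0:ℝ) ≤ (k:ℝ) - a := by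
    have : (a:ℝ) ≤ k := Nat.cast_le.2 hak
    linarith
  nlinarith [mul_le_mul_of_nonneg_left h1 hbk, mul_le_mul_of_nonneg_left h2 hka]

lemma shift_sum (f : ℕ → ℝ) : ∀ m, ∑ j ∈ Finset.range m, f (j + 1) = ∑ i ∈ Finset.Icc 1 m, f i := by
  intro m
  induction m with
  | zero => simp
  | succ n ih => rw [Finset.sum_range_succ, ih, Finset.sum_Icc_succ_top (by omega : 1 ≤ n + 1)]

lemma emb_lt {m : ℕ} (e : Fin m ↪o ℕ) (h1 : ∀ i, 1 ≤ e i) : ∀ i : Fin m, (i : ℕ) < e i := by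
  have : ∀ n : ℕ, ∀ hn : n < m, n < e ⟨n, hn⟩ := by
    intro n
    induction n with
    | zero => intro hn; exact lt_of_lt_of_le Nat.zero_lt_one (h1 _)
    | succ j ih =>
        intro hn
        have hj : j < m := by omega
        have h2 : e ⟨j, hj⟩ < e ⟨j + 1, hn⟩ := e.strictMono (by simp [Fin.mk_lt_mk])
        have := ih hj
        omega
  exact fun i => by have := this i.1 i.2; simpa using this

lemma sum_le_Icc_sum (f : ℕ → ℝ) (h0 : f 0 = 0) (hnn : ∀ x, 0 ≤ f x)
    (hmono : ∀ i j, 1 ≤ i → i ≤ j → f j ≤ f i) (s : Finset ℕ) :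
    ∑ x ∈ s, f x ≤ ∑ i ∈ Finset.Icc 1 s.card, f i := by
  classical
  have herase : ∑ x ∈ s.erase 0, f x = ∑ x ∈ s, f x := Finset.sum_erase s h0
  set t := s.erase 0 with ht
  have htcard : t.card ≤ s.card := Finset.card_le_card (Finset.erase_subset 0 s)
  have h0t : (0 : ℕ) ∉ t := Finset.notMem_erase 0 s
  have main : ∑ x ∈ t, f x ≤ ∑ i ∈ Finset.Icc 1 t.card, f i := by
    set m := t.card with hm
    set e := t.orderEmbOfFin rfl with he
    have hmem : ∀ i, e i ∈ t := fun i => t.orderEmbOfFin_mem rfl i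
    have h1 : ∀ i, 1 ≤ e i := fun i =>
      Nat.one_le_iff_ne_zero.2 (fun h => h0t (h ▸ hmem i))
    have hlt : ∀ i : Fin m, (i : ℕ) < e i := emb_lt e h1
    have himg : Finset.image e Finset.univ = t := by
      apply Finset.coe_injective
      rw [Finset.coe_image, Finset.coe_univ, Set.image_univ]
      exact t.range_orderEmbOfFin rfl
    have hsum : ∑ x ∈ t, f x = ∑ i : Fin m, f (e i) :=
      (Finset.sum_congr himg.symm (fun x _ => rfl)).trans
        (Finset.sum_image (fun a _ b _ h => e.injective h))
    rw [hsum]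
    calc ∑ i : Fin m, f (e i) ≤ ∑ i : Fin m, f ((i : ℕ) + 1) := by
          refine Finset.sum_le_sum fun i _ => ?_
          exact hmono ((i : ℕ) + 1) (e i) (by omega) (hlt i)
      _ = ∑ j ∈ Finset.range m, f (j + 1) := Fin.sum_univ_eq_sum_range (fun j => f (j + 1)) m
      _ = ∑ i ∈ Finset.Icc 1 m, f i := shift_sum f m
  calc ∑ x ∈ s, f x = ∑ x ∈ t, f x := herase.symm
    _ ≤ ∑ i ∈ Finset.Icc 1 t.card, f i := main
    _ ≤ ∑ i ∈ Finset.Icc 1 s.card, f i := by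
        refine Finset.sum_le_sum_of_subset_of_nonneg ?_ (fun i _ _ => hnn i)
        exact Finset.Icc_subset_Icc_right htcard

/-- Reduction: to bound `topSum P k` it suffices to bound the initial sums of a
nonneg, decreasing `P` with `P 0 = 0`. -/
lemma ts_reduce {P R : ℕ → ℝ}
    (hP0 : P 0 = 0) (hPnn : ∀ x, 0 ≤ P x) (hPmono : ∀ i j, 1 ≤ i → i ≤ j → P j ≤ P i)
    (hsum : ∀ k, ∑ i ∈ Finset.Icc 1 k, P i ≤ topSum R k) :
    ∀ k, topSum P k ≤ topSum R k := by
  intro k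
  refine ts_csSup_le fun s hs => ?_
  calc ∑ x ∈ s, P x ≤ ∑ i ∈ Finset.Icc 1 s.card, P i := sum_le_Icc_sum P hP0 hPnn hPmono s
    _ = ∑ i ∈ Finset.Icc 1 k, P i := by rw [hs]
    _ ≤ topSum R k := hsum k

end FanoAux

open FanoAux in
/-- Any distribution `R` that majorizes `Q` and has list decoding error (without
side information) at most `ε` also majorizes the Fano-type-1 distribution. -/
theorem stmt_6 (Q d : ℕ → ℝ) (L : ℕ) (ε : ℝ)
    (hQ : IsPmf Q) (hd : IsDecRearr Q d) (hL : 1 ≤ L)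
    (hε0 : 0 ≤ ε) (hε1 : ε ≤ 1 - topSum Q L)
    (R : ℕ → ℝ) (hR : IsPmf R)
    (hmaj : ∀ k, topSum Q k ≤ topSum R k)
    (hPe : 1 - topSum R L ≤ ε) :
    ∀ k, topSum (fanoType1 d L ε) k ≤ topSum R k := by
  classical
  obtain ⟨hd0, hdm, hS⟩ := hd
  have Ssucc : ∀ k : ℕ, topSum Q (k + 1) = topSum Q k + d (k + 1) := by
    intro k
    rw [← hS, ← hS, Finset.sum_Icc_succ_top (by omega : 1 ≤ k + 1)]
  have dnn : ∀ i, 0 ≤ d i := by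
    intro i
    cases i with
    | zero => simp [hd0]
    | succ n =>
        have h1 := ts_mono hQ (Nat.le_succ n)
        have h2 := Ssucc n
        linarith
  have SL1 : topSum Q L ≤ 1 - ε := by linarith
  have TL : 1 - ε ≤ topSum R L := by linarith
  have Sle1 : ∀ k, topSum Q k ≤ 1 := ts_le_one hQ
  have d1S : d 1 = topSum Q 1 := by rw [← hS 1]; simp
  -- existence of a small element of the J-set
  have hJex : ∃ j, (1 ≤ j ∧ d j < fanoV d L ε j) ∧ j ≤ L + 1 := by
    rcases lt_or_ge (topSum Q L) (1 - ε) with hc | hc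
    · refine ⟨L, ⟨hL, ?_⟩, by omega⟩
      have hdL : topSum Q L = topSum Q (L - 1) + d L := by
        have h := Ssucc (L - 1)
        rwa [Nat.sub_add_cancel hL] at h
      rw [fanoV, if_pos (le_refl L), hS]
      have hden : ((L : ℝ) - L + 1) = 1 := by ring
      rw [hden, div_one]
      linarith
    · have hSL : topSum Q L = 1 - ε := le_antisymm SL1 hc
      refine ⟨L + 1, ⟨by omega, ?_⟩, le_refl _⟩
      rw [fanoV, if_neg (by omega)]
      have h1 : d (L + 1) ≤ d 1 := hdm 1 (L + 1) le_rfl (by omega)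
      have h2 : topSum Q 1 ≤ topSum Q L := ts_mono hQ hL
      have h3 := Ssucc L
      have h4 := Sle1 (L + 1)
      linarith
  obtain ⟨j₀, hj₀, hj₀L⟩ := hJex
  have hJmem : 1 ≤ fanoJ d L ε ∧ d (fanoJ d L ε) < fanoV d L ε (fanoJ d L ε) := by
    have h := Nat.sInf_mem (⟨j₀, hj₀⟩ : {j : ℕ | 1 ≤ j ∧ d j < fanoV d L ε j}.Nonempty)
    exact h
  have hJ1 : 1 ≤ fanoJ d L ε := hJmem.1
  have hJL1 : fanoJ d L ε ≤ L + 1 := le_trans (Nat.sInf_le hj₀) hj₀L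
  have hVd : ∀ j, 1 ≤ j → j < fanoJ d L ε → fanoV d L ε j ≤ d j := fun j h1 h2 =>
    le_of_not_gt fun hlt => Nat.notMem_of_lt_sInf h2 ⟨h1, hlt⟩
  have hSL_eq : fanoJ d L ε = L + 1 → topSum Q L = 1 - ε := by
    intro hJ
    have h := hVd L hL (by omega)
    rw [fanoV, if_pos le_rfl, hS] at h
    have hden : ((L : ℝ) - L + 1) = 1 := by ring
    rw [hden, div_one] at h
    have hdL : topSum Q L = topSum Q (L - 1) + d L := by
      have h2 := Ssucc (L - 1)
      rwa [Nat.sub_add_cancel hL] at h2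
    exact le_antisymm SL1 (by linarith)
  -- facts about v := fanoV at J, when J ≤ L
  have hveq : fanoJ d L ε ≤ L →
      ((L : ℝ) - (fanoJ d L ε) + 1) * fanoV d L ε (fanoJ d L ε)
        = (1 - ε) - topSum Q (fanoJ d L ε - 1) := by
    intro hJL
    rw [fanoV, if_pos hJL, hS]
    have hden : (0 : ℝ) < (L : ℝ) - (fanoJ d L ε) + 1 := by
      have : ((fanoJ d L ε : ℕ) : ℝ) ≤ (L : ℝ) := Nat.cast_le.2 hJL
      linarith
    field_simp
  have hvnn : fanoJ d L ε ≤ L → 0 ≤ fanoV d L ε (fanoJ d L ε) := by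
    intro hJL
    have h1 := hveq hJL
    have hden : (0 : ℝ) < (L : ℝ) - (fanoJ d L ε) + 1 := by
      have : ((fanoJ d L ε : ℕ) : ℝ) ≤ (L : ℝ) := Nat.cast_le.2 hJL
      linarith
    have h2 : topSum Q (fanoJ d L ε - 1) ≤ topSum Q L := ts_mono hQ (by omega)
    nlinarith
  have hvgt : d (fanoJ d L ε) < fanoV d L ε (fanoJ d L ε) := hJmem.2
  have hvle_prev : 2 ≤ fanoJ d L ε → fanoJ d L ε ≤ L →
      fanoV d L ε (fanoJ d L ε) ≤ d (fanoJ d L ε - 1) := by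
    intro hJ2 hJL
    have h := hVd (fanoJ d L ε - 1) (by omega) (by omega)
    rw [fanoV, if_pos (by omega : fanoJ d L ε - 1 ≤ L), hS] at h
    have e2 : fanoJ d L ε - 1 - 1 = fanoJ d L ε - 2 := by omega
    rw [e2] at h
    have hc1 : ((fanoJ d L ε - 1 : ℕ) : ℝ) = (fanoJ d L ε : ℝ) - 1 := by
      rw [Nat.cast_sub (by omega)]; norm_num
    rw [hc1] at h
    have hsplit : topSum Q (fanoJ d L ε - 1) = topSum Q (fanoJ d L ε - 2) + d (fanoJ d L ε - 1) := by
      have h2 := Ssucc (fanoJ d L ε - 2)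
      rwa [(by omega : fanoJ d L ε - 2 + 1 = fanoJ d L ε - 1)] at h2
    have hden : (0 : ℝ) < (L : ℝ) - (fanoJ d L ε) + 1 := by
      have : ((fanoJ d L ε : ℕ) : ℝ) ≤ (L : ℝ) := Nat.cast_le.2 hJL
      linarith
    have h3 : (1 - ε) - topSum Q (fanoJ d L ε - 2)
        ≤ ((L : ℝ) - ((fanoJ d L ε : ℝ) - 1) + 1) * d (fanoJ d L ε - 1) := by
      rw [div_le_iff₀ (by linarith)] at h
      linarith
    have h4 := hveq hJL
    have goal2 : ((L : ℝ) - (fanoJ d L ε) + 1) * fanoV d L ε (fanoJ d L ε)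
        ≤ ((L : ℝ) - (fanoJ d L ε) + 1) * d (fanoJ d L ε - 1) := by
      rw [h4, hsplit]
      nlinarith
    exact le_of_mul_le_mul_left goal2 hden
  -- branch-independent facts about P := fanoType1 d L ε
  have hP_lt : ∀ x, x < fanoJ d L ε → fanoType1 d L ε x = d x := by
    intro x hx; rw [fanoType1, if_pos hx]
  have hP_mid : ∀ x, fanoJ d L ε ≤ x → x ≤ L →
      fanoType1 d L ε x = fanoV d L ε (fanoJ d L ε) := by
    intro x h1 h2; rw [fanoType1, if_neg (not_lt.2 h1), if_pos h2]
  have hP0 : fanoType1 d L ε 0 = 0 := by rw [hP_lt 0 (by omega), hd0]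
  have Iccsplit : ∀ (f : ℕ → ℝ) (b c : ℕ), b ≤ c →
      ∑ i ∈ Finset.Icc 1 c, f i = ∑ i ∈ Finset.Icc 1 b, f i + ∑ i ∈ Finset.Ioc b c, f i := by
    intro f b c h
    have e : ∀ n, Finset.Icc 1 n = Finset.Ioc 0 n := fun n => by
      rw [← Finset.Icc_add_one_left_eq_Ioc, zero_add]
    rw [e, e, ← Finset.sum_Ioc_consecutive f (Nat.zero_le b) h]
  have hPP_lt : ∀ k, k < fanoJ d L ε →
      ∑ i ∈ Finset.Icc 1 k, fanoType1 d L ε i = topSum Q k := by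
    intro k hk
    rw [← hS]
    refine Finset.sum_congr rfl fun i hi => ?_
    have := Finset.mem_Icc.1 hi
    exact hP_lt i (by omega)
  have hPP_mid : ∀ k, fanoJ d L ε ≤ k → k ≤ L →
      ∑ i ∈ Finset.Icc 1 k, fanoType1 d L ε i
        = topSum Q (fanoJ d L ε - 1) + ((k + 1 - fanoJ d L ε : ℕ) : ℝ) * fanoV d L ε (fanoJ d L ε) := by
    intro k h1 h2
    rw [Iccsplit _ (fanoJ d L ε - 1) k (by omega), hPP_lt _ (by omega)]
    congr 1
    have hc : ∀ i ∈ Finset.Ioc (fanoJ d L ε - 1) k, fanoType1 d L ε i = fanoV d L ε (fanoJ d L ε) := by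
      intro i hi
      have := Finset.mem_Ioc.1 hi
      exact hP_mid i (by omega) (by omega)
    rw [Finset.sum_congr rfl hc, Finset.sum_const, Nat.card_Ioc, nsmul_eq_mul]
    congr 2
    omega
  have hPP_L : ∑ i ∈ Finset.Icc 1 L, fanoType1 d L ε i = 1 - ε := by
    rcases le_or_gt (fanoJ d L ε) L with hJL | hJL
    · rw [hPP_mid L hJL le_rfl]
      have hcast : ((L + 1 - fanoJ d L ε : ℕ) : ℝ) = (L : ℝ) - (fanoJ d L ε) + 1 := by
        rw [Nat.cast_sub (by omega)]
        push_cast; ring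
      rw [hcast]
      have := hveq hJL
      linarith
    · have hJeq : fanoJ d L ε = L + 1 := by omega
      rw [hPP_lt L (by omega), hSL_eq hJeq]
  -- the middle-range final bound (branch independent)
  have hmidfinal : ∀ k, fanoJ d L ε ≤ k → k ≤ L →
      ∑ i ∈ Finset.Icc 1 k, fanoType1 d L ε i ≤ topSum R k := by
    intro k hk hkL
    have hJL : fanoJ d L ε ≤ L := le_trans hk hkL
    rw [hPP_mid k hk hkL]
    have hcast : ((k + 1 - fanoJ d L ε : ℕ) : ℝ) = (k : ℝ) + 1 - (fanoJ d L ε) := by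
      rw [Nat.cast_sub (by omega)]
      push_cast; ring
    rw [hcast]
    have hcon := ts_concave hR (a := fanoJ d L ε - 1) (k := k) (b := L) (by omega) hkL
    rw [Nat.cast_sub (by omega : 1 ≤ fanoJ d L ε), Nat.cast_one] at hcon
    have hTa : topSum Q (fanoJ d L ε - 1) ≤ topSum R (fanoJ d L ε - 1) := hmaj _
    have hv := hveq hJL
    have hc : (0 : ℝ) < (L : ℝ) - (fanoJ d L ε) + 1 := by
      have : ((fanoJ d L ε : ℕ) : ℝ) ≤ (L : ℝ) := Nat.cast_le.2 hJL
      linarith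
    have hkLr : (k : ℝ) ≤ (L : ℝ) := Nat.cast_le.2 hkL
    have hJkr : ((fanoJ d L ε : ℕ) : ℝ) ≤ (k : ℝ) := Nat.cast_le.2 hk
    have key : ((L : ℝ) - (fanoJ d L ε) + 1) *
        (topSum Q (fanoJ d L ε - 1) + ((k : ℝ) + 1 - (fanoJ d L ε)) * fanoV d L ε (fanoJ d L ε))
        ≤ ((L : ℝ) - (fanoJ d L ε) + 1) * topSum R k := by
      have e1 : ((L : ℝ) - (fanoJ d L ε) + 1) *
          (topSum Q (fanoJ d L ε - 1) + ((k : ℝ) + 1 - (fanoJ d L ε)) * fanoV d L ε (fanoJ d L ε))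
          = ((L : ℝ) - k) * topSum Q (fanoJ d L ε - 1) + ((k : ℝ) + 1 - (fanoJ d L ε)) * (1 - ε) := by
        linear_combination ((k : ℝ) + 1 - (fanoJ d L ε)) * hv
      rw [e1]
      have h2 : ((L : ℝ) - k) * topSum Q (fanoJ d L ε - 1)
          ≤ ((L : ℝ) - k) * topSum R (fanoJ d L ε - 1) :=
        mul_le_mul_of_nonneg_left hTa (by linarith)
      have h3 : ((k : ℝ) + 1 - (fanoJ d L ε)) * (1 - ε)
          ≤ ((k : ℝ) + 1 - (fanoJ d L ε)) * topSum R L :=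
        mul_le_mul_of_nonneg_left TL (by linarith)
      linarith [hcon]
    exact le_of_mul_le_mul_left key hc
  -- nonnegativity on the initial segment
  have hPnnL : ∀ x, x ≤ L → 0 ≤ fanoType1 d L ε x := by
    intro x hx
    rcases lt_or_ge x (fanoJ d L ε) with h1 | h1
    · rw [hP_lt x h1]; exact dnn x
    · rw [hP_mid x h1 hx]; exact hvnn (le_trans h1 hx)
  -- W facts
  have hWgt : ∀ n, L < n → ((n : ℝ) - L) * fanoW d L ε n = topSum Q n - (1 - ε) := by
    intro n hn
    rw [fanoW, if_neg (by omega), hS]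
    have hden : (0 : ℝ) < (n : ℝ) - L := by
      have : (L : ℝ) < (n : ℝ) := Nat.cast_lt.2 hn
      linarith
    field_simp
  have hNL : L ∈ {n : ℕ | L ≤ n ∧ fanoW d L ε n < d n} := by
    refine ⟨le_rfl, ?_⟩
    rw [fanoW, if_pos rfl]
    linarith [dnn L]
    -- split on boundedness of the W-set
  by_cases hKb : BddAbove {n : ℕ | L ≤ n ∧ fanoW d L ε n < d n}
  · -- bounded case: fanoK is finite
    set k₁ := sSup {n : ℕ | L ≤ n ∧ fanoW d L ε n < d n} with hk₁def
    have hk₁mem : L ≤ k₁ ∧ fanoW d L ε k₁ < d k₁ := Nat.sSup_mem ⟨L, hNL⟩ hKb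
    have hk₁L : L ≤ k₁ := hk₁mem.1
    have hKeq : fanoK d L ε = (k₁ : ℕ∞) := by
      rw [fanoK]
      apply le_antisymm
      · refine sSup_le ?_
        rintro x ⟨n, rfl, hn1, hn2⟩
        exact_mod_cast Nat.cast_le.2 (le_csSup hKb ⟨hn1, hn2⟩)
      · exact le_sSup ⟨k₁, rfl, hk₁mem.1, hk₁mem.2⟩
    have hKne : fanoK d L ε ≠ ⊤ := by rw [hKeq]; simp
    have hKtoNat : (fanoK d L ε).toNat = k₁ := by rw [hKeq]; simp
    have hWd : ∀ n, k₁ < n → d n ≤ fanoW d L ε n := by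
      intro n hn
      by_contra h
      push_neg at h
      have hLn : L ≤ n := le_trans hk₁mem.1 (le_of_lt hn)
      have := le_csSup hKb (⟨hLn, h⟩ : n ∈ {n : ℕ | L ≤ n ∧ fanoW d L ε n < d n})
      omega
    have hSk₁L : k₁ = L → topSum Q L = 1 - ε := by
      intro he
      have h := hWd (L + 1) (by omega)
      have h2 := hWgt (L + 1) (by omega)
      have h3 := Ssucc L
      have hcast : ((L + 1 : ℕ) : ℝ) - (L : ℝ) = 1 := by push_cast; ring
      rw [hcast, one_mul] at h2
      exact le_antisymm SL1 (by linarith)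
    have hwk : L < k₁ → ((k₁ : ℝ) - L) * fanoW d L ε k₁ = topSum Q k₁ - (1 - ε) :=
      fun h => hWgt k₁ h
    have hwlt : fanoW d L ε k₁ < d k₁ := hk₁mem.2
    have hwge : L < k₁ → d (k₁ + 1) ≤ fanoW d L ε k₁ := by
      intro hLk
      have h := hWd (k₁ + 1) (by omega)
      have h2 := hWgt (k₁ + 1) (by omega)
      have h3 := Ssucc k₁
      have hcast : ((k₁ + 1 : ℕ) : ℝ) - (L : ℝ) = (k₁ : ℝ) - L + 1 := by push_cast; ring
      rw [hcast] at h2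
      have hc : (0 : ℝ) < (k₁ : ℝ) - L := by
        have : (L : ℝ) < (k₁ : ℝ) := Nat.cast_lt.2 hLk
        linarith
      have h4 : ((k₁ : ℝ) - L + 1) * d (k₁ + 1) ≤ ((k₁ : ℝ) - L + 1) * fanoW d L ε (k₁ + 1) :=
        mul_le_mul_of_nonneg_left h (by linarith)
      have h5 : ((k₁ : ℝ) - L) * d (k₁ + 1) ≤ ((k₁ : ℝ) - L) * fanoW d L ε k₁ := by
        rw [hwk hLk]
        linarith
      exact le_of_mul_le_mul_left h5 hc
    -- remaining branch values
    have hP_w : ∀ x, L < x → x ≤ k₁ → fanoType1 d L ε x = fanoW d L ε k₁ := by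
      intro x h1 h2
      rw [fanoType1, if_neg (by omega : ¬ x < fanoJ d L ε), if_neg (by omega : ¬ x ≤ L),
        if_pos (by rw [hKeq]; exact_mod_cast Nat.cast_le.2 h2), if_neg hKne, hKtoNat]
    have hP_after : ∀ x, k₁ < x → fanoType1 d L ε x = d x := by
      intro x hx
      by_cases hxJ : x < fanoJ d L ε
      · exact hP_lt x hxJ
      rw [fanoType1, if_neg hxJ, if_neg (by omega : ¬ x ≤ L), if_neg]
      rw [hKeq]
      intro hcon
      have : x ≤ k₁ := by exact_mod_cast hcon
      omega
    -- monotonicity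
    have hPstep : ∀ x, 1 ≤ x → fanoType1 d L ε (x + 1) ≤ fanoType1 d L ε x := by
      intro x hx
      by_cases h1 : x + 1 < fanoJ d L ε
      · rw [hP_lt _ h1, hP_lt _ (by omega)]
        exact hdm x (x + 1) hx (by omega)
      · by_cases h2 : x + 1 ≤ L
        · have hJL : fanoJ d L ε ≤ L := by omega
          rw [hP_mid (x + 1) (by omega) h2]
          by_cases h3 : x < fanoJ d L ε
          · have hJeq : fanoJ d L ε = x + 1 := by omega
            rw [hP_lt _ h3]
            have h4 := hvle_prev (by omega) hJL
            have h5 : fanoJ d L ε - 1 = x := by omega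
            rwa [h5] at h4
          · rw [hP_mid x (by omega) (by omega)]
        · by_cases h3 : x ≤ L
          · have hxL : x = L := by omega
            have hPL : d (L + 1) ≤ fanoType1 d L ε L := by
              by_cases hJL : fanoJ d L ε ≤ L
              · rw [hP_mid L hJL le_rfl]
                have h5 : d (L + 1) ≤ d (fanoJ d L ε) := hdm _ _ hJ1 (by omega)
                linarith [hvgt]
              · rw [hP_lt L (by omega)]
                exact hdm L (L + 1) hL (by omega)
            rw [hxL]
            by_cases h4 : L + 1 ≤ k₁
            · rw [hP_w (L + 1) (by omega) h4]
              have h5 : d k₁ ≤ d (L + 1) := hdm (L + 1) k₁ (by omega) h4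
              linarith [hwlt, hPL]
            · rw [hP_after (L + 1) (by omega)]
              exact hPL
          · have hLx : L < x := by omega
            by_cases h4 : x + 1 ≤ k₁
            · rw [hP_w (x + 1) (by omega) h4, hP_w x hLx (by omega)]
            · by_cases h5 : x ≤ k₁
              · have hxk : x = k₁ := by omega
                rw [hP_after (x + 1) (by omega), hP_w x hLx h5, hxk]
                exact hwge (by omega)
              · rw [hP_after (x + 1) (by omega), hP_after x (by omega)]
                exact hdm x (x + 1) (by omega) (by omega)
    have hPmono : ∀ i j, 1 ≤ i → i ≤ j → fanoType1 d L ε j ≤ fanoType1 d L ε i := by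
      intro i j h1 hij
      induction j, hij using Nat.le_induction with
      | base => exact le_rfl
      | succ n hn ih => exact le_trans (hPstep n (by omega)) ih
    have hPnn : ∀ x, 0 ≤ fanoType1 d L ε x := by
      intro x
      rcases le_or_gt x L with h1 | h1
      · exact hPnnL x h1
      · rcases le_or_gt x k₁ with h2 | h2
        · rw [hP_w x h1 h2]
          have := hwge (lt_of_lt_of_le h1 h2)
          linarith [dnn (k₁ + 1)]
        · rw [hP_after x h2]
          exact dnn x
    -- partial sums in the tail
    have hPP_w : ∀ k, L < k → k ≤ k₁ →
        ∑ i ∈ Finset.Icc 1 k, fanoType1 d L ε i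
          = (1 - ε) + ((k - L : ℕ) : ℝ) * fanoW d L ε k₁ := by
      intro k h1 h2
      rw [Iccsplit _ L k (by omega), hPP_L]
      congr 1
      have hc : ∀ i ∈ Finset.Ioc L k, fanoType1 d L ε i = fanoW d L ε k₁ := by
        intro i hi
        have := Finset.mem_Ioc.1 hi
        exact hP_w i (by omega) (by omega)
      rw [Finset.sum_congr rfl hc, Finset.sum_const, Nat.card_Ioc, nsmul_eq_mul]
    have hPP_k₁ : ∑ i ∈ Finset.Icc 1 k₁, fanoType1 d L ε i = topSum Q k₁ := by
      rcases eq_or_lt_of_le hk₁L with he | hlt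
      · rw [← he, hPP_L]
        exact (hSk₁L he.symm).symm
      · rw [hPP_w k₁ hlt le_rfl]
        have hcast : ((k₁ - L : ℕ) : ℝ) = (k₁ : ℝ) - L := Nat.cast_sub hk₁L
        rw [hcast]
        linarith [hwk hlt]
    have hPP_after : ∀ k, k₁ ≤ k →
        ∑ i ∈ Finset.Icc 1 k, fanoType1 d L ε i = topSum Q k := by
      intro k hk
      rw [Iccsplit _ k₁ k hk, hPP_k₁]
      have hc : ∀ i ∈ Finset.Ioc k₁ k, fanoType1 d L ε i = d i := by
        intro i hi
        exact hP_after i (Finset.mem_Ioc.1 hi).1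
      rw [Finset.sum_congr rfl hc]
      have hsd : topSum Q k = topSum Q k₁ + ∑ i ∈ Finset.Ioc k₁ k, d i := by
        rw [← hS, ← hS, Iccsplit d k₁ k hk]
      linarith
    -- conclude
    refine ts_reduce hP0 hPnn hPmono ?_
    intro k
    rcases lt_or_ge k (fanoJ d L ε) with hk | hk
    · rw [hPP_lt k hk]; exact hmaj k
    · rcases le_or_gt k L with hkL | hkL
      · exact hmidfinal k hk hkL
      · rcases le_or_gt k k₁ with hk1 | hk1
        · have hLk₁ : L < k₁ := lt_of_lt_of_le hkL hk1
          rw [hPP_w k hkL hk1]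
          have hcast : ((k - L : ℕ) : ℝ) = (k : ℝ) - L := Nat.cast_sub (by omega)
          rw [hcast]
          have hcon := ts_concave hR (a := L) (k := k) (b := k₁) (by omega) hk1
          have hTb : topSum Q k₁ ≤ topSum R k₁ := hmaj k₁
          have hw := hwk hLk₁
          have hc : (0 : ℝ) < (k₁ : ℝ) - L := by
            have : (L : ℝ) < (k₁ : ℝ) := Nat.cast_lt.2 hLk₁
            linarith
          have hkk : (k : ℝ) ≤ (k₁ : ℝ) := Nat.cast_le.2 hk1
          have hLk : (L : ℝ) ≤ (k : ℝ) := Nat.cast_le.2 (by omega)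
          have key : ((k₁ : ℝ) - L) * ((1 - ε) + ((k : ℝ) - L) * fanoW d L ε k₁)
              ≤ ((k₁ : ℝ) - L) * topSum R k := by
            have e1 : ((k₁ : ℝ) - L) * ((1 - ε) + ((k : ℝ) - L) * fanoW d L ε k₁)
                = ((k₁ : ℝ) - k) * (1 - ε) + ((k : ℝ) - L) * topSum Q k₁ := by
              linear_combination ((k : ℝ) - L) * hw
            rw [e1]
            have h2 : ((k₁ : ℝ) - k) * (1 - ε) ≤ ((k₁ : ℝ) - k) * topSum R L :=
              mul_le_mul_of_nonneg_left TL (by linarith)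
            have h3 : ((k : ℝ) - L) * topSum Q k₁ ≤ ((k : ℝ) - L) * topSum R k₁ :=
              mul_le_mul_of_nonneg_left hTb (by linarith)
            linarith [hcon]
          exact le_of_mul_le_mul_left key hc
        · rw [hPP_after k (by omega)]
          exact hmaj k
  · -- unbounded case: fanoK = ⊤
    have hKtop : fanoK d L ε = ⊤ := by
      rw [fanoK, sSup_eq_top]
      intro b hb
      obtain ⟨m, rfl⟩ : ∃ m : ℕ, b = (m : ℕ∞) := by
        cases b with
        | top => exact absurd rfl (ne_of_lt hb)
        | coe m => exact ⟨m, rfl⟩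
      obtain ⟨n, hn, hbn⟩ := not_bddAbove_iff.1 hKb m
      exact ⟨(n : ℕ∞), ⟨n, rfl, hn.1, hn.2⟩, by exact_mod_cast hbn⟩
    have hP_top : ∀ x, L < x → fanoType1 d L ε x = 0 := by
      intro x hx
      rw [fanoType1, if_neg (by omega : ¬ x < fanoJ d L ε), if_neg (by omega : ¬ x ≤ L),
        if_pos (by rw [hKtop]; exact le_top), if_pos hKtop]
    have hPstep : ∀ x, 1 ≤ x → fanoType1 d L ε (x + 1) ≤ fanoType1 d L ε x := by
      intro x hx
      by_cases h1 : x + 1 < fanoJ d L ε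
      · rw [hP_lt _ h1, hP_lt _ (by omega)]
        exact hdm x (x + 1) hx (by omega)
      · by_cases h2 : x + 1 ≤ L
        · have hJL : fanoJ d L ε ≤ L := by omega
          rw [hP_mid (x + 1) (by omega) h2]
          by_cases h3 : x < fanoJ d L ε
          · have hJeq : fanoJ d L ε = x + 1 := by omega
            rw [hP_lt _ h3]
            have h4 := hvle_prev (by omega) hJL
            have h5 : fanoJ d L ε - 1 = x := by omega
            rwa [h5] at h4
          · rw [hP_mid x (by omega) (by omega)]
        · by_cases h3 : x ≤ L
          · have hxL : x = L := by omega
            rw [hxL, hP_top (L + 1) (by omega)]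
            exact hPnnL L le_rfl
          · rw [hP_top (x + 1) (by omega), hP_top x (by omega)]
    have hPmono : ∀ i j, 1 ≤ i → i ≤ j → fanoType1 d L ε j ≤ fanoType1 d L ε i := by
      intro i j h1 hij
      induction j, hij using Nat.le_induction with
      | base => exact le_rfl
      | succ n hn ih => exact le_trans (hPstep n (by omega)) ih
    have hPnn : ∀ x, 0 ≤ fanoType1 d L ε x := by
      intro x
      rcases le_or_gt x L with h1 | h1
      · exact hPnnL x h1
      · rw [hP_top x h1]
    have hPP_top : ∀ k, L < k → ∑ i ∈ Finset.Icc 1 k, fanoType1 d L ε i = 1 - ε := by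
      intro k hk
      rw [Iccsplit _ L k (by omega), hPP_L]
      have hc : ∀ i ∈ Finset.Ioc L k, fanoType1 d L ε i = 0 := by
        intro i hi
        exact hP_top i (Finset.mem_Ioc.1 hi).1
      rw [Finset.sum_congr rfl hc, Finset.sum_const_zero, add_zero]
    refine ts_reduce hP0 hPnn hPmono ?_
    intro k
    rcases lt_or_ge k (fanoJ d L ε) with hk | hk
    · rw [hPP_lt k hk]; exact hmaj k
    · rcases le_or_gt k L with hkL | hkL
      · exact hmidfinal k hk hkL
      · rw [hPP_top k hkL]
        exact le_trans TL (ts_mono hR (by omega))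
end
end

section
/- For integers 1 ≤ L < M < ∞, real 0 ≤ ε ≤ 1 − L/M, and order α ∈ (0,1) ∪ (1,∞), the maximum of Arimoto's conditional Rényi entropy H_α^A(X|Y) over all pairs (X, Y) with X valued in {1,...,M} and P_e^{(L)}(X|Y) ≤ ε equals (1/(1−α)) log( (1−ε)^α L^{1−α} + ε^α (M−L)^{1−α} ). -/
noncomputable section

/-- Arimoto's conditional Rényi entropy of order `α`:
`H_α^A(X|Y) = (α/(1−α)) log E[‖P_{X|Y}‖_α]`, `‖P‖_α = (∑_x P(x)^α)^{1/α}`. -/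
def arimoto (α : ℝ) {β : Type*} (q : β → ℝ) (W : β → ℕ → ℝ) : ℝ :=
  (α / (1 - α)) * Real.log (∑' y, q y * (∑' x, W y x ^ α) ^ (1 / α))


lemma sum_holder {ι : Type*} (s : Finset ι) (f g : ι → ℝ) (hf : ∀ i ∈ s, 0 ≤ f i)
    (hg : ∀ i ∈ s, 0 ≤ g i) {θ : ℝ} (h0 : 0 < θ) (h1 : θ < 1) :
    ∑ i ∈ s, f i ^ θ * g i ^ (1 - θ) ≤ (∑ i ∈ s, f i) ^ θ * (∑ i ∈ s, g i) ^ (1 - θ) := by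
  have hθ1 : 0 < 1 - θ := by linarith
  have hpq : Real.HolderConjugate (1/θ) (1/(1-θ)) := by
    constructor
    · simp only [one_div, inv_inv, inv_one]; ring
    · positivity
    · positivity
  have h := Real.inner_le_Lp_mul_Lq_of_nonneg (s := s) (f := fun i => f i ^ θ)
    (g := fun i => g i ^ (1 - θ)) hpq
    (fun i hi => Real.rpow_nonneg (hf i hi) _) (fun i hi => Real.rpow_nonneg (hg i hi) _)
  simp only [one_div_one_div] at h
  have e1 : ∀ (u : ℝ) (t : ℝ), 0 ≤ u → t ≠ 0 → (u ^ t) ^ (1/t) = u := fun u t hu ht => by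
    rw [← Real.rpow_mul hu, mul_one_div, div_self ht, Real.rpow_one]
  calc ∑ i ∈ s, f i ^ θ * g i ^ (1 - θ)
      ≤ (∑ i ∈ s, (f i ^ θ) ^ (1/θ)) ^ θ * (∑ i ∈ s, (g i ^ (1-θ)) ^ (1/(1-θ))) ^ (1-θ) := h
    _ = (∑ i ∈ s, f i) ^ θ * (∑ i ∈ s, g i) ^ (1 - θ) := by
        rw [Finset.sum_congr rfl fun i hi => e1 _ _ (hf i hi) h0.ne',
            Finset.sum_congr rfl fun i hi => e1 _ _ (hg i hi) hθ1.ne']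

lemma topSum_exists {L M : ℕ} (hLM : L ≤ M) (W : ℕ → ℝ) (hW0 : ∀ x, 0 ≤ W x)
    (hout : ∀ x ∉ Finset.Icc 1 M, W x = 0) :
    ∃ S : Finset ℕ, S ⊆ Finset.Icc 1 M ∧ S.card = L ∧ topSum W L = ∑ x ∈ S, W x ∧
      ∀ s : Finset ℕ, s.card = L → ∑ x ∈ s, W x ≤ topSum W L := by
  classical
  set I := Finset.Icc 1 M with hI
  have hcard : I.card = M := by simp [hI]
  obtain ⟨S₀, hS₀I, hS₀card⟩ := Finset.exists_subset_card_eq (s := I) (n := L) (by rw [hcard]; exact hLM)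
  set E := I.powerset.filter (fun t => t.card = L) with hE
  have hS₀E : S₀ ∈ E := by
    simp only [hE, Finset.mem_filter, Finset.mem_powerset]; exact ⟨hS₀I, hS₀card⟩
  obtain ⟨S, hSE, hSmax⟩ := Finset.exists_max_image E (fun t => ∑ x ∈ t, W x) ⟨S₀, hS₀E⟩
  rw [hE, Finset.mem_filter, Finset.mem_powerset] at hSE
  have hub : ∀ r ∈ {t : ℝ | ∃ s : Finset ℕ, s.card = L ∧ t = ∑ x ∈ s, W x},
      r ≤ ∑ x ∈ S, W x := by
    rintro r ⟨s, hscard, rfl⟩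
    have h1 : ∑ x ∈ s, W x = ∑ x ∈ s ∩ I, W x := by
      refine (Finset.sum_subset Finset.inter_subset_left (fun x hx hx' => ?_)).symm
      exact hout x fun hxI => hx' (Finset.mem_inter.2 ⟨hx, hxI⟩)
    have hcardle : (s ∩ I).card ≤ L := hscard ▸ Finset.card_le_card Finset.inter_subset_left
    obtain ⟨u, hu1, hu2, hu3⟩ := Finset.exists_subsuperset_card_eq
      (Finset.inter_subset_right : s ∩ I ⊆ I) hcardle (by rw [hcard]; exact hLM)
    have huE : u ∈ E := by
      simp only [hE, Finset.mem_filter, Finset.mem_powerset]; exact ⟨hu2, hu3⟩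
    calc ∑ x ∈ s, W x = ∑ x ∈ s ∩ I, W x := h1
      _ ≤ ∑ x ∈ u, W x := Finset.sum_le_sum_of_subset_of_nonneg hu1 (fun x _ _ => hW0 x)
      _ ≤ ∑ x ∈ S, W x := hSmax u huE
  have hmem : (∑ x ∈ S, W x) ∈ {t : ℝ | ∃ s : Finset ℕ, s.card = L ∧ t = ∑ x ∈ s, W x} :=
    ⟨S, hSE.2, rfl⟩
  have heq : topSum W L = ∑ x ∈ S, W x :=
    le_antisymm (csSup_le ⟨_, hmem⟩ hub) (le_csSup ⟨_, hub⟩ hmem)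
  exact ⟨S, hSE.1, hSE.2, heq, fun s hs => heq ▸ hub _ ⟨s, hs, rfl⟩⟩


section pointwise

variable {L M : ℕ} {ε α : ℝ}

lemma aux_const_sum (hα0 : 0 < α) {t n : ℝ} (ht : 0 ≤ t) (hn : 0 < n) :
    n * (t/n) ^ α = t ^ α * n ^ (1-α) := by
  rw [Real.div_rpow ht hn.le, Real.rpow_sub hn, Real.rpow_one]
  have h1 : n ^ α ≠ 0 := (Real.rpow_pos_of_pos hn α).ne'
  field_simp

lemma aux_div_rpow {t n : ℝ} (ht : 0 ≤ t) (hn : 0 < n) :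
    (t/n) ^ (α-1) = t ^ (α-1) * n ^ (1-α) := by
  rw [Real.div_rpow ht hn.le, ← neg_sub 1 α, Real.rpow_neg hn.le, div_eq_mul_inv, inv_inv]

lemma pointwise_lt (hL : 1 ≤ L) (hLM : L < M)
    (hε0 : 0 ≤ ε) (hε1 : ε < 1) (hα0 : 0 < α) (hα1 : α < 1)
    (W : ℕ → ℝ) (hW0 : ∀ x, 0 ≤ W x) (hout : ∀ x ∉ Finset.Icc 1 M, W x = 0)
    (hWsum : ∑ x ∈ Finset.Icc 1 M, W x = 1)
    (hδ0 : ε = 0 → topSum W L = 1) :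
    (∑' x, W x ^ α) ^ (1/α) ≤
      ((1-ε)^α * (L:ℝ)^(1-α) + ε^α * ((M:ℝ)-L)^(1-α)) ^ (1/α - 1) *
        ((1-ε)^(α-1) * (L:ℝ)^(1-α) * topSum W L
          + ε^(α-1) * ((M:ℝ)-L)^(1-α) * (1 - topSum W L)) := by
  classical
  obtain ⟨S, hSI, hScard, hTop, -⟩ := topSum_exists hLM.le W hW0 hout
  set I := Finset.Icc 1 M with hI
  set T := I \ S with hT
  have hL' : (0:ℝ) < L := by exact_mod_cast hL
  have hML : (0:ℝ) < (M:ℝ) - L := by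
    have : (L:ℝ) < M := by exact_mod_cast hLM
    linarith
  have hIcard : I.card = M := by simp [hI]
  have hTcardℕ : T.card = M - L := by rw [hT, Finset.card_sdiff_of_subset hSI, hIcard, hScard]
  have hTcard : (T.card : ℝ) = (M:ℝ) - L := by
    rw [hTcardℕ, Nat.cast_sub hLM.le]
  have hST : ∑ x ∈ T, W x = 1 - topSum W L := by
    have := Finset.sum_sdiff (f := W) hSI
    rw [hWsum] at this
    rw [hTop, ← hT] at *
    linarith
  have htsum : ∑' x, W x ^ α = ∑ x ∈ I, W x ^ α := by
    refine tsum_eq_sum (fun x hx => ?_)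
    rw [hout x hx, Real.zero_rpow hα0.ne']
  have ha : 0 < 1 - ε := by linarith
  set w1 := (L:ℝ)^(1-α) with hw1
  set w2 := ((M:ℝ)-L)^(1-α) with hw2
  have hw1p : 0 < w1 := Real.rpow_pos_of_pos hL' _
  have hw2p : 0 < w2 := Real.rpow_pos_of_pos hML _
  rcases eq_or_lt_of_le hε0 with hε | hε
  · -- ε = 0
    have hε' : ε = 0 := hε.symm
    subst hε'
    have hσ : topSum W L = 1 := hδ0 rfl
    have hWT : ∀ x ∈ T, W x = 0 := by
      have h0 : ∑ x ∈ T, W x = 0 := by rw [hST, hσ]; ring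
      intro x hx
      exact (Finset.sum_eq_zero_iff_of_nonneg (fun i _ => hW0 i)).1 h0 x hx
    have hsplit : ∑ x ∈ I, W x ^ α = ∑ x ∈ S, W x ^ α := by
      rw [← Finset.sum_sdiff (f := fun x => W x ^ α) hSI, ← hT]
      have h1 : ∑ x ∈ T, W x ^ α = 0 := Finset.sum_eq_zero fun x hx => by
        rw [hWT x hx, Real.zero_rpow hα0.ne']
      rw [h1, zero_add]
    have hhold := sum_holder S W (fun _ => 1) (fun i _ => hW0 i)
      (fun i _ => zero_le_one) hα0 hα1
    simp only [Real.one_rpow, mul_one] at hhold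
    have hSsum : ∑ x ∈ S, W x = 1 := by rw [← hTop]; exact hσ
    have hcount : ∑ x ∈ S, (1:ℝ) = L := by
      rw [Finset.sum_const, hScard, nsmul_eq_mul, mul_one]
    have hb : ∑ x ∈ S, W x ^ α ≤ w1 := by
      rw [hSsum, hcount, Real.one_rpow, one_mul] at hhold
      exact hhold
    have hRHS : ((1-0)^α * w1 + (0:ℝ)^α * w2) ^ (1/α - 1) *
        ((1-0)^(α-1) * w1 * topSum W L + (0:ℝ)^(α-1) * w2 * (1 - topSum W L))
        = w1 ^ (1/α) := by
      rw [hσ]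
      have h1 : (α:ℝ) - 1 ≠ 0 := by intro h; exact hα1.ne (by linarith)
      simp only [sub_zero, Real.one_rpow, Real.zero_rpow hα0.ne', Real.zero_rpow h1,
        zero_mul, add_zero, one_mul, mul_one, sub_self, mul_zero]
      rw [← Real.rpow_add_one hw1p.ne']
      ring_nf
    rw [htsum, hsplit, hRHS]
    exact Real.rpow_le_rpow (Finset.sum_nonneg fun i _ => Real.rpow_nonneg (hW0 i) _)
      hb (by positivity)
  · -- 0 < ε
    set c : ℕ → ℝ := fun x => if x ∈ S then (1-ε) / L else ε / ((M:ℝ)-L) with hc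
    have hcpos : ∀ x, 0 < c x := by
      intro x; rw [hc]; dsimp only
      split
      · exact div_pos ha hL'
      · exact div_pos hε hML
    set f : ℕ → ℝ := fun x => W x * c x ^ (α-1) with hf
    set g : ℕ → ℝ := fun x => c x ^ α with hg
    have hkey : ∀ x, W x ^ α = f x ^ α * g x ^ (1-α) := by
      intro x
      rw [hf, hg]; dsimp only
      rw [Real.mul_rpow (hW0 x) (Real.rpow_nonneg (hcpos x).le _),
        ← Real.rpow_mul (hcpos x).le, ← Real.rpow_mul (hcpos x).le,
        mul_assoc, ← Real.rpow_add (hcpos x)]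
      have h0 : (α-1)*α + α*(1-α) = 0 := by ring
      rw [h0, Real.rpow_zero, mul_one]
    have hhold : ∑ x ∈ I, W x ^ α ≤ (∑ x ∈ I, f x) ^ α * (∑ x ∈ I, g x) ^ (1-α) := by
      rw [Finset.sum_congr rfl (fun x _ => hkey x)]
      exact sum_holder I f g (fun i _ => mul_nonneg (hW0 i) (Real.rpow_nonneg (hcpos i).le _))
        (fun i _ => Real.rpow_nonneg (hcpos i).le _) hα0 hα1
    have hsum_split : ∀ (h : ℕ → ℝ), ∑ x ∈ I, h x = ∑ x ∈ S, h x + ∑ x ∈ T, h x := by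
      intro h
      rw [hT, ← Finset.sum_sdiff (f := h) hSI]
      ring
    have hfS : ∀ x ∈ S, f x = ((1-ε)/L) ^ (α-1) * W x := by
      intro x hx; rw [hf, hc]; dsimp only; rw [if_pos hx]; ring
    have hfT : ∀ x ∈ T, f x = (ε/((M:ℝ)-L)) ^ (α-1) * W x := by
      intro x hx; rw [hf, hc]; dsimp only
      rw [if_neg (Finset.mem_sdiff.1 hx).2]; ring
    have hFeq : ∑ x ∈ I, f x =
        (1-ε)^(α-1) * w1 * topSum W L + ε^(α-1) * w2 * (1 - topSum W L) := by
      rw [hsum_split f, Finset.sum_congr rfl hfS, Finset.sum_congr rfl hfT,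
        ← Finset.mul_sum, ← Finset.mul_sum, ← hTop, hST,
        aux_div_rpow ha.le hL', aux_div_rpow hε0 hML]
    have hGeq : ∑ x ∈ I, g x = (1-ε)^α * w1 + ε^α * w2 := by
      rw [hsum_split g]
      have h1 : ∑ x ∈ S, g x = (L:ℝ) * ((1-ε)/L) ^ α := by
        have e : ∀ x ∈ S, g x = ((1-ε)/(L:ℝ)) ^ α := fun x hx => by
          rw [hg, hc]; dsimp only; rw [if_pos hx]
        rw [Finset.sum_congr rfl e, Finset.sum_const, hScard, nsmul_eq_mul]
      have h2 : ∑ x ∈ T, g x = ((M:ℝ)-L) * (ε/((M:ℝ)-L)) ^ α := by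
        have e : ∀ x ∈ T, g x = (ε/((M:ℝ)-L)) ^ α := fun x hx => by
          rw [hg, hc]; dsimp only; rw [if_neg (Finset.mem_sdiff.1 hx).2]
        rw [Finset.sum_congr rfl e, Finset.sum_const, nsmul_eq_mul, hTcard]
      rw [h1, h2, aux_const_sum hα0 ha.le hL', aux_const_sum hα0 hε0 hML]
    set K := (1-ε)^α * w1 + ε^α * w2 with hK
    have hKpos : 0 < K := by
      have h1 : 0 < (1-ε)^α * w1 := mul_pos (Real.rpow_pos_of_pos ha _) hw1p
      have h2 : 0 ≤ ε^α * w2 := mul_nonneg (Real.rpow_nonneg hε0 _) hw2p.le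
      rw [hK]; linarith
    set F := (1-ε)^(α-1) * w1 * topSum W L + ε^(α-1) * w2 * (1 - topSum W L) with hFd
    have hFnn : 0 ≤ F := by
      rw [← hFeq]
      exact Finset.sum_nonneg fun i _ => mul_nonneg (hW0 i) (Real.rpow_nonneg (hcpos i).le _)
    have h1 : (∑ x ∈ I, W x ^ α) ^ (1/α) ≤ (F ^ α * K ^ (1-α)) ^ (1/α) := by
      apply Real.rpow_le_rpow (Finset.sum_nonneg fun i _ => Real.rpow_nonneg (hW0 i) _)
        (by rw [← hFeq, ← hGeq]; exact hhold) (by positivity)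
    have h2 : (F ^ α * K ^ (1-α)) ^ (1/α) = K ^ (1/α - 1) * F := by
      rw [Real.mul_rpow (Real.rpow_nonneg hFnn _) (Real.rpow_nonneg hKpos.le _),
        ← Real.rpow_mul hFnn, ← Real.rpow_mul hKpos.le,
        mul_one_div, div_self hα0.ne', Real.rpow_one]
      have h3 : (1-α) * (1/α) = 1/α - 1 := by field_simp
      rw [h3, mul_comm]
    rw [htsum]
    rw [h2] at h1
    exact h1

end pointwise


section pointwisegt

variable {L M : ℕ} {ε α : ℝ}

lemma pointwise_gt (hL : 1 ≤ L) (hLM : L < M)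
    (hε0 : 0 ≤ ε) (hε1 : ε < 1) (hα1 : 1 < α)
    (W : ℕ → ℝ) (hW0 : ∀ x, 0 ≤ W x) (hout : ∀ x ∉ Finset.Icc 1 M, W x = 0)
    (hWsum : ∑ x ∈ Finset.Icc 1 M, W x = 1) :
    ((1-ε)^α * (L:ℝ)^(1-α) + ε^α * ((M:ℝ)-L)^(1-α)) ^ (1/α - 1) *
        ((1-ε)^(α-1) * (L:ℝ)^(1-α) * topSum W L
          + ε^(α-1) * ((M:ℝ)-L)^(1-α) * (1 - topSum W L))
      ≤ (∑' x, W x ^ α) ^ (1/α) := by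
  classical
  have hα0 : (0:ℝ) < α := lt_trans one_pos hα1
  obtain ⟨S, hSI, hScard, hTop, -⟩ := topSum_exists hLM.le W hW0 hout
  set I := Finset.Icc 1 M with hI
  set T := I \ S with hT
  have hL' : (0:ℝ) < L := by exact_mod_cast hL
  have hML : (0:ℝ) < (M:ℝ) - L := by
    have : (L:ℝ) < M := by exact_mod_cast hLM
    linarith
  have hIcard : I.card = M := by simp [hI]
  have hTcardℕ : T.card = M - L := by rw [hT, Finset.card_sdiff_of_subset hSI, hIcard, hScard]
  have hTcard : (T.card : ℝ) = (M:ℝ) - L := by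
    rw [hTcardℕ, Nat.cast_sub hLM.le]
  have hST : ∑ x ∈ T, W x = 1 - topSum W L := by
    have h := Finset.sum_sdiff (f := W) hSI
    rw [hWsum] at h
    rw [hTop, ← hT] at *
    linarith
  have htsum : ∑' x, W x ^ α = ∑ x ∈ I, W x ^ α := by
    refine tsum_eq_sum (fun x hx => ?_)
    rw [hout x hx, Real.zero_rpow hα0.ne']
  have ha : 0 < 1 - ε := by linarith
  set w1 := (L:ℝ)^(1-α) with hw1
  set w2 := ((M:ℝ)-L)^(1-α) with hw2
  have hw1p : 0 < w1 := Real.rpow_pos_of_pos hL' _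
  have hw2p : 0 < w2 := Real.rpow_pos_of_pos hML _
  set c : ℕ → ℝ := fun x => if x ∈ S then (1-ε) / L else ε / ((M:ℝ)-L) with hc
  have hcnn : ∀ x, 0 ≤ c x := by
    intro x; rw [hc]; dsimp only
    split
    · exact (div_pos ha hL').le
    · exact div_nonneg hε0 hML.le
  have hθ0 : (0:ℝ) < 1/α := by positivity
  have hθ1 : 1/α < 1 := by rw [div_lt_one hα0]; exact hα1
  set f : ℕ → ℝ := fun x => W x ^ α with hf
  set g : ℕ → ℝ := fun x => c x ^ α with hg
  have hexp : α * (1 - 1/α) = α - 1 := by field_simp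
  have hkey : ∀ x, f x ^ (1/α) * g x ^ (1 - 1/α) = W x * c x ^ (α-1) := by
    intro x
    rw [hf, hg]; dsimp only
    rw [← Real.rpow_mul (hW0 x), ← Real.rpow_mul (hcnn x),
      mul_one_div, div_self hα0.ne', Real.rpow_one, hexp]
  have hhold : ∑ x ∈ I, W x * c x ^ (α-1) ≤
      (∑ x ∈ I, W x ^ α) ^ (1/α) * (∑ x ∈ I, c x ^ α) ^ (1 - 1/α) := by
    rw [← Finset.sum_congr rfl (fun x _ => hkey x)]
    exact sum_holder I f g (fun i _ => Real.rpow_nonneg (hW0 i) _)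
      (fun i _ => Real.rpow_nonneg (hcnn i) _) hθ0 hθ1
  have hsum_split : ∀ (h : ℕ → ℝ), ∑ x ∈ I, h x = ∑ x ∈ S, h x + ∑ x ∈ T, h x := by
    intro h
    rw [hT, ← Finset.sum_sdiff (f := h) hSI]
    ring
  have hFeq : ∑ x ∈ I, W x * c x ^ (α-1) =
      (1-ε)^(α-1) * w1 * topSum W L + ε^(α-1) * w2 * (1 - topSum W L) := by
    have hfS : ∀ x ∈ S, W x * c x ^ (α-1) = ((1-ε)/L) ^ (α-1) * W x := by
      intro x hx; rw [hc]; dsimp only; rw [if_pos hx]; ring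
    have hfT : ∀ x ∈ T, W x * c x ^ (α-1) = (ε/((M:ℝ)-L)) ^ (α-1) * W x := by
      intro x hx; rw [hc]; dsimp only
      rw [if_neg (Finset.mem_sdiff.1 hx).2]; ring
    rw [hsum_split (fun x => W x * c x ^ (α-1)), Finset.sum_congr rfl hfS,
      Finset.sum_congr rfl hfT, ← Finset.mul_sum, ← Finset.mul_sum, ← hTop, hST,
      aux_div_rpow ha.le hL', aux_div_rpow hε0 hML]
  have hGeq : ∑ x ∈ I, c x ^ α = (1-ε)^α * w1 + ε^α * w2 := by
    have h1 : ∑ x ∈ S, c x ^ α = (L:ℝ) * ((1-ε)/L) ^ α := by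
      have e : ∀ x ∈ S, c x ^ α = ((1-ε)/(L:ℝ)) ^ α := fun x hx => by
        rw [hc]; dsimp only; rw [if_pos hx]
      rw [Finset.sum_congr rfl e, Finset.sum_const, hScard, nsmul_eq_mul]
    have h2 : ∑ x ∈ T, c x ^ α = ((M:ℝ)-L) * (ε/((M:ℝ)-L)) ^ α := by
      have e : ∀ x ∈ T, c x ^ α = (ε/((M:ℝ)-L)) ^ α := fun x hx => by
        rw [hc]; dsimp only; rw [if_neg (Finset.mem_sdiff.1 hx).2]
      rw [Finset.sum_congr rfl e, Finset.sum_const, nsmul_eq_mul, hTcard]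
    rw [hsum_split (fun x => c x ^ α), h1, h2,
      aux_const_sum hα0 ha.le hL', aux_const_sum hα0 hε0 hML]
  set K := (1-ε)^α * w1 + ε^α * w2 with hK
  have hKpos : 0 < K := by
    have h1 : 0 < (1-ε)^α * w1 := mul_pos (Real.rpow_pos_of_pos ha _) hw1p
    have h2 : 0 ≤ ε^α * w2 := mul_nonneg (Real.rpow_nonneg hε0 _) hw2p.le
    rw [hK]; linarith
  set N := (∑ x ∈ I, W x ^ α) ^ (1/α) with hN
  have hmain : (1-ε)^(α-1) * w1 * topSum W L + ε^(α-1) * w2 * (1 - topSum W L)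
      ≤ N * K ^ (1 - 1/α) := by
    rw [← hFeq, ← hGeq] at *
    rw [hN]
    exact hhold
  have hNnn : 0 ≤ N := Real.rpow_nonneg
    (Finset.sum_nonneg fun i _ => Real.rpow_nonneg (hW0 i) _) _
  have hcancel : K ^ (1/α - 1) * K ^ (1 - 1/α) = 1 := by
    rw [← Real.rpow_add hKpos]
    norm_num
  calc K ^ (1/α - 1) *
        ((1-ε)^(α-1) * w1 * topSum W L + ε^(α-1) * w2 * (1 - topSum W L))
      ≤ K ^ (1/α - 1) * (N * K ^ (1 - 1/α)) := by
        exact mul_le_mul_of_nonneg_left hmain (Real.rpow_nonneg hKpos.le _)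
    _ = N * (K ^ (1/α - 1) * K ^ (1 - 1/α)) := by ring
    _ = N := by rw [hcancel, mul_one]
    _ = (∑' x, W x ^ α) ^ (1/α) := by rw [hN, htsum]

end pointwisegt


section AB

variable {L M : ℕ} {ε α : ℝ}

lemma base_ineq (hL : 1 ≤ L) (hLM : L < M) (hε1 : ε ≤ 1 - (L:ℝ)/M) :
    ε / ((M:ℝ) - L) ≤ (1 - ε) / L := by
  have hL' : (0:ℝ) < L := by exact_mod_cast hL
  have hLM' : (L:ℝ) < M := by exact_mod_cast hLM
  have hM : (0:ℝ) < M := lt_trans hL' hLM'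
  have hML : (0:ℝ) < (M:ℝ) - L := by linarith
  rw [div_le_div_iff₀ hML hL']
  have h1 : (L:ℝ)/M * M = L := div_mul_cancel₀ _ hM.ne'
  have h2 : ε * M ≤ M - L := by nlinarith
  nlinarith

lemma AB_lt (hL : 1 ≤ L) (hLM : L < M) (hε : 0 < ε) (hε1 : ε ≤ 1 - (L:ℝ)/M)
    (hα1 : α < 1) :
    (1-ε)^(α-1) * (L:ℝ)^(1-α) ≤ ε^(α-1) * ((M:ℝ)-L)^(1-α) := by
  have hL' : (0:ℝ) < L := by exact_mod_cast hL
  have hLM' : (L:ℝ) < M := by exact_mod_cast hLM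
  have hM : (0:ℝ) < M := lt_trans hL' hLM'
  have hML : (0:ℝ) < (M:ℝ) - L := by linarith
  have hε1' : ε < 1 := by
    have : 0 < (L:ℝ)/M := div_pos hL' hM
    linarith
  have ha : 0 < 1 - ε := by linarith
  rw [← aux_div_rpow ha.le hL', ← aux_div_rpow hε.le hML]
  exact Real.rpow_le_rpow_of_nonpos (div_pos hε hML) (base_ineq hL hLM hε1)
    (by linarith)

lemma AB_gt (hL : 1 ≤ L) (hLM : L < M) (hε0 : 0 ≤ ε) (hε1 : ε ≤ 1 - (L:ℝ)/M)
    (hα1 : 1 < α) :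
    ε^(α-1) * ((M:ℝ)-L)^(1-α) ≤ (1-ε)^(α-1) * (L:ℝ)^(1-α) := by
  have hL' : (0:ℝ) < L := by exact_mod_cast hL
  have hLM' : (L:ℝ) < M := by exact_mod_cast hLM
  have hM : (0:ℝ) < M := lt_trans hL' hLM'
  have hML : (0:ℝ) < (M:ℝ) - L := by linarith
  have hε1' : ε < 1 := by
    have : 0 < (L:ℝ)/M := div_pos hL' hM
    linarith
  have ha : 0 < 1 - ε := by linarith
  rw [← aux_div_rpow hε0 hML, ← aux_div_rpow ha.le hL']
  exact Real.rpow_le_rpow (div_nonneg hε0 hML.le) (base_ineq hL hLM hε1) (by linarith)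

end AB

lemma arith_key_lt {kc a b sb e : ℝ} (hkc : 0 ≤ kc) (hab : a ≤ b) (h : 1 - sb ≤ e) :
    kc*a*sb + kc*b*(1-sb) ≤ kc*(a*(1-e) + b*e) := by
  nlinarith [mul_nonneg hkc (mul_nonneg (sub_nonneg.2 hab) (sub_nonneg.2 h))]

lemma arith_key_gt {kc a b sb e : ℝ} (hkc : 0 ≤ kc) (hab : b ≤ a) (h : 1 - sb ≤ e) :
    kc*(a*(1-e) + b*e) ≤ kc*a*sb + kc*b*(1-sb) := by
  nlinarith [mul_nonneg hkc (mul_nonneg (sub_nonneg.2 hab) (sub_nonneg.2 h))]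


/-- Fano's inequality with list decoding for Arimoto's conditional Rényi
entropy of order `α ∈ (0,1) ∪ (1,∞)`: the maximum of `H_α^A(X|Y)` over pairs
`(X,Y)` with `X` valued in `{1,…,M}` and `P_e^{(L)}(X|Y) ≤ ε` equals
`(1/(1−α)) log((1−ε)^α L^{1−α} + ε^α (M−L)^{1−α})`. -/
theorem stmt_9 (L M : ℕ) (ε α : ℝ) (hL : 1 ≤ L) (hLM : L < M)
    (hε0 : 0 ≤ ε) (hε1 : ε ≤ 1 - (L : ℝ) / M) (hα0 : 0 < α) (hα1 : α ≠ 1) :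
    (∀ (β : Type) (q : β → ℝ) (W : β → ℕ → ℝ), IsPmf q → (∀ y, IsPmf (W y)) →
      (∀ y x, W y x ≠ 0 → 1 ≤ x ∧ x ≤ M) →
      1 - ∑' y, q y * topSum (W y) L ≤ ε →
      arimoto α q W ≤
        (1 / (1 - α)) * Real.log
          ((1 - ε) ^ α * (L : ℝ) ^ (1 - α) + ε ^ α * ((M : ℝ) - L) ^ (1 - α))) ∧
    (∃ (β : Type) (q : β → ℝ) (W : β → ℕ → ℝ), IsPmf q ∧ (∀ y, IsPmf (W y)) ∧
      (∀ y x, W y x ≠ 0 → 1 ≤ x ∧ x ≤ M) ∧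
      1 - ∑' y, q y * topSum (W y) L ≤ ε ∧
      arimoto α q W =
        (1 / (1 - α)) * Real.log
          ((1 - ε) ^ α * (L : ℝ) ^ (1 - α) + ε ^ α * ((M : ℝ) - L) ^ (1 - α))) := by
  classical
  have hL' : (0:ℝ) < L := by exact_mod_cast hL
  have hLM' : (L:ℝ) < M := by exact_mod_cast hLM
  have hM : (0:ℝ) < M := lt_trans hL' hLM'
  have hML : (0:ℝ) < (M:ℝ) - L := by linarith
  have hε1' : ε < 1 := by
    have : 0 < (L:ℝ)/M := div_pos hL' hM
    linarith
  have ha : 0 < 1 - ε := by linarith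
  have h1αne : (1:ℝ) - α ≠ 0 := sub_ne_zero.2 (Ne.symm hα1)
  set w1 := (L:ℝ)^(1-α) with hw1
  set w2 := ((M:ℝ)-L)^(1-α) with hw2
  have hw1p : 0 < w1 := Real.rpow_pos_of_pos hL' _
  have hw2p : 0 < w2 := Real.rpow_pos_of_pos hML _
  set K := (1-ε)^α * w1 + ε^α * w2 with hK
  have hKpos : 0 < K := by
    have h1 : 0 < (1-ε)^α * w1 := mul_pos (Real.rpow_pos_of_pos ha _) hw1p
    have h2 : 0 ≤ ε^α * w2 := mul_nonneg (Real.rpow_nonneg hε0 _) hw2p.le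
    rw [hK]; linarith
  set A := (1-ε)^(α-1) * w1 with hA
  set B := ε^(α-1) * w2 with hB
  have hA0 : 0 ≤ A := mul_nonneg (Real.rpow_nonneg ha.le _) hw1p.le
  have hB0 : 0 ≤ B := mul_nonneg (Real.rpow_nonneg hε0 _) hw2p.le
  set Kc := K ^ (1/α - 1) with hKc
  have hKc0 : 0 ≤ Kc := Real.rpow_nonneg hKpos.le _
  have hiden : A * (1-ε) + B * ε = K := by
    rw [hA, hB, hK]
    rcases eq_or_lt_of_le hε0 with h|h
    · rw [← h]
      simp [Real.one_rpow, Real.zero_rpow hα0.ne']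
    · have e1 : (1-ε)^(α-1) * (1-ε) = (1-ε)^α := by
        rw [← Real.rpow_add_one ha.ne']; ring_nf
      have e2 : ε^(α-1) * ε = ε^α := by
        rw [← Real.rpow_add_one h.ne']; ring_nf
      linear_combination w1 * e1 + w2 * e2
  have hKKc : Kc * K = K ^ (1/α) := by
    rw [hKc, ← Real.rpow_add_one hKpos.ne']
    norm_num
  have hfin : Kc * (A * (1-ε) + B * ε) = K ^ (1/α) := by rw [hiden]; exact hKKc
  constructor
  · -- upper bound
    intro β q W hq hW hsupp herr
    have hq0 := hq.1
    have hqsum : Summable q := by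
      by_contra h
      have h2 := tsum_eq_zero_of_not_summable h
      rw [hq.2] at h2
      exact one_ne_zero h2
    have hout : ∀ y, ∀ x ∉ Finset.Icc 1 M, W y x = 0 := by
      intro y x hx
      by_contra h
      exact hx (Finset.mem_Icc.2 (hsupp y x h))
    have hWsum : ∀ y, ∑ x ∈ Finset.Icc 1 M, W y x = 1 := by
      intro y; rw [← tsum_eq_sum (L := SummationFilter.unconditional (β := ℕ)) (hout y)]; exact (hW y).2
    set σ := fun y => topSum (W y) L with hσd
    have hσ01 : ∀ y, 0 ≤ σ y ∧ σ y ≤ 1 := by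
      intro y
      obtain ⟨S, hSI, hScard, hTop, -⟩ := topSum_exists hLM.le (W y) (hW y).1 (hout y)
      rw [hσd]; dsimp only; rw [hTop]
      exact ⟨Finset.sum_nonneg fun i _ => (hW y).1 i,
        by rw [← hWsum y]
           exact Finset.sum_le_sum_of_subset_of_nonneg hSI fun i _ _ => (hW y).1 i⟩
    have hsummσ : Summable (fun y => q y * σ y) :=
      Summable.of_nonneg_of_le (fun y => mul_nonneg (hq0 y) (hσ01 y).1)
        (fun y => mul_le_of_le_one_right (hq0 y) (hσ01 y).2) hqsum
    set Sb := ∑' y, q y * σ y with hSb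
    have herr' : 1 - Sb ≤ ε := herr
    have hSb1 : Sb ≤ 1 := by
      rw [hSb, ← hq.2]
      exact Summable.tsum_le_tsum (fun y => mul_le_of_le_one_right (hq0 y) (hσ01 y).2) hsummσ hqsum
    set N := fun y => (∑' x, W y x ^ α) ^ (1/α) with hNd
    have htsumx : ∀ y, ∑' x, W y x ^ α = ∑ x ∈ Finset.Icc 1 M, W y x ^ α := by
      intro y
      exact tsum_eq_sum fun x hx => by rw [hout y x hx, Real.zero_rpow hα0.ne']
    have hN0 : ∀ y, 0 ≤ N y := by
      intro y
      apply Real.rpow_nonneg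
      rw [htsumx y]
      exact Finset.sum_nonneg fun i _ => Real.rpow_nonneg ((hW y).1 i) _
    obtain ⟨y0, hy0⟩ : ∃ y, 0 < q y := by
      by_contra h
      push_neg at h
      have h1 : ∀ y, q y = 0 := fun y => le_antisymm (h y) (hq0 y)
      have h2 : ∑' y, q y = 0 := by simp [h1]
      rw [hq.2] at h2; exact one_ne_zero h2
    have hNy0 : 0 < N y0 := by
      obtain ⟨x0, hx0⟩ : ∃ x, 0 < W y0 x := by
        by_contra h
        push_neg at h
        have h1 : ∀ x, W y0 x = 0 := fun x => le_antisymm (h x) ((hW y0).1 x)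
        have h2 : ∑' x, W y0 x = 0 := by simp [h1]
        rw [(hW y0).2] at h2; exact one_ne_zero h2
      have hx0I : x0 ∈ Finset.Icc 1 M := Finset.mem_Icc.2 (hsupp y0 x0 hx0.ne')
      have hpos : 0 < ∑' x, W y0 x ^ α := by
        rw [htsumx y0]
        exact lt_of_lt_of_le (Real.rpow_pos_of_pos hx0 α)
          (Finset.single_le_sum (fun i _ => Real.rpow_nonneg ((hW y0).1 i) _) hx0I)
      exact Real.rpow_pos_of_pos hpos _
    have hsubσ : Summable (fun z => q z * (1 - σ z)) := by
      have e2 : (fun z => q z * (1 - σ z)) = fun z => q z - q z * σ z := funext fun z => by ring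
      rw [e2]; exact hqsum.sub hsummσ
    have htot : ∑' z, q z * (1 - σ z) = 1 - Sb := by
      have e2 : (fun z => q z * (1 - σ z)) = fun z => q z - q z * σ z := funext fun z => by ring
      rw [e2, Summable.tsum_sub hqsum hsummσ, hq.2]
    have hsum2 : Summable (fun y => q y * (Kc * (A * σ y + B * (1 - σ y)))) := by
      refine Summable.of_nonneg_of_le
        (fun y => mul_nonneg (hq0 y) (mul_nonneg hKc0 (add_nonneg
          (mul_nonneg hA0 (hσ01 y).1) (mul_nonneg hB0 (by linarith [(hσ01 y).2])))))
        (fun y => ?_) (hqsum.mul_right (Kc * (A + B)))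
      refine mul_le_mul_of_nonneg_left ?_ (hq0 y)
      refine mul_le_mul_of_nonneg_left ?_ hKc0
      have h1 := (hσ01 y).1
      have h2 := (hσ01 y).2
      nlinarith
    have hstep2 : ∑' y, q y * (Kc * (A * σ y + B * (1 - σ y)))
        = (Kc*A) * Sb + (Kc*B) * (1 - Sb) := by
      have e : (fun y => q y * (Kc * (A * σ y + B * (1 - σ y)))) =
          fun y => (Kc*A) * (q y * σ y) + (Kc*B) * (q y * (1 - σ y)) :=
        funext fun y => by ring
      rw [e, Summable.tsum_add (hsummσ.mul_left _) (hsubσ.mul_left _), tsum_mul_left,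
        tsum_mul_left, htot]
    have harN : arimoto α q W = (α/(1-α)) * Real.log (∑' y, q y * N y) := rfl
    rcases lt_or_gt_of_ne hα1 with hlt | hgt
    · -- α < 1
      have h1α : 0 < 1 - α := by linarith
      have hzero : ∀ y, q y ≠ 0 → ε = 0 → σ y = 1 := by
        intro y hy hε'
        have hterm : ∀ z, 0 ≤ q z * (1 - σ z) :=
          fun z => mul_nonneg (hq0 z) (by linarith [(hσ01 z).2])
        have h1 : q y * (1 - σ y) ≤ 0 := by
          have h2 := Summable.le_tsum hsubσ y (fun z _ => hterm z)
          rw [htot] at h2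
          have h3 : 1 - Sb ≤ 0 := by rw [hε'] at herr'; exact herr'
          linarith
        have h2 : q y * (1 - σ y) = 0 := le_antisymm h1 (hterm y)
        rcases mul_eq_zero.1 h2 with h|h
        · exact absurd h hy
        · linarith
      have hper : ∀ y, q y * N y ≤ q y * (Kc * (A * σ y + B * (1 - σ y))) := by
        intro y
        rcases eq_or_ne (q y) 0 with h|h
        · rw [h]; simp
        · refine mul_le_mul_of_nonneg_left ?_ (hq0 y)
          have hpt := pointwise_lt hL hLM hε0 hε1' hα0 hlt (W y) ((hW y).1) (hout y)
            (hWsum y) (fun hε' => hzero y h hε')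
          simp only [hNd, hσd, hKc, hA, hB, hK, hw1, hw2]
          exact hpt
      have hsumN : Summable (fun y => q y * N y) :=
        Summable.of_nonneg_of_le (fun y => mul_nonneg (hq0 y) (hN0 y)) hper hsum2
      have hstep3 : (Kc*A) * Sb + (Kc*B) * (1 - Sb) ≤ K ^ (1/α) := by
        rcases eq_or_lt_of_le hε0 with h0|h0
        · have h1 : 1 - Sb ≤ 0 := by rw [← h0] at herr'; exact herr'
          have h3 : Sb = 1 - ε := by rw [← h0]; linarith
          rw [h3, ← hfin]
          exact le_of_eq (by ring)
        · have hBA : A ≤ B := AB_lt hL hLM h0 hε1 hlt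
          exact le_trans (arith_key_lt hKc0 hBA herr') (le_of_eq hfin)
      have hTle : ∑' y, q y * N y ≤ K ^ (1/α) := by
        calc ∑' y, q y * N y ≤ ∑' y, q y * (Kc * (A * σ y + B * (1 - σ y))) :=
              Summable.tsum_le_tsum hper hsumN hsum2
          _ = (Kc*A) * Sb + (Kc*B) * (1 - Sb) := hstep2
          _ ≤ K ^ (1/α) := hstep3
      have hTpos : 0 < ∑' y, q y * N y :=
        lt_of_lt_of_le (mul_pos hy0 hNy0)
          (Summable.le_tsum hsumN y0 (fun z _ => mul_nonneg (hq0 z) (hN0 z)))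
      have hlog : Real.log (∑' y, q y * N y) ≤ (1/α) * Real.log K := by
        have h2 := Real.log_le_log hTpos hTle
        rwa [Real.log_rpow hKpos] at h2
      rw [harN]
      have hcoef : 0 ≤ α / (1-α) := div_nonneg hα0.le h1α.le
      calc (α/(1-α)) * Real.log (∑' y, q y * N y)
          ≤ (α/(1-α)) * ((1/α) * Real.log K) := mul_le_mul_of_nonneg_left hlog hcoef
        _ = (1/(1-α)) * Real.log K := by
            field_simp
    · -- α > 1
      have hper : ∀ y, q y * (Kc * (A * σ y + B * (1 - σ y))) ≤ q y * N y := by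
        intro y
        refine mul_le_mul_of_nonneg_left ?_ (hq0 y)
        have hpt := pointwise_gt hL hLM hε0 hε1' hgt (W y) ((hW y).1) (hout y) (hWsum y)
        simp only [hNd, hσd, hKc, hA, hB, hK, hw1, hw2]
        exact hpt
      have hNle1 : ∀ y, N y ≤ 1 := by
        intro y
        have hle : ∀ x ∈ Finset.Icc 1 M, W y x ^ α ≤ W y x := by
          intro x hx
          have h1 : W y x ≤ 1 := by
            rw [← hWsum y]
            exact Finset.single_le_sum (fun i _ => (hW y).1 i) hx
          rcases eq_or_lt_of_le ((hW y).1 x) with h|h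
          · rw [← h, Real.zero_rpow hα0.ne']
          · calc W y x ^ α ≤ W y x ^ (1:ℝ) :=
                  Real.rpow_le_rpow_of_exponent_ge h h1 (by linarith)
              _ = W y x := Real.rpow_one _
        have hs : ∑' x, W y x ^ α ≤ 1 := by
          rw [htsumx y]
          calc ∑ x ∈ Finset.Icc 1 M, W y x ^ α ≤ ∑ x ∈ Finset.Icc 1 M, W y x :=
                Finset.sum_le_sum hle
            _ = 1 := hWsum y
        exact Real.rpow_le_one (by
          rw [htsumx y]
          exact Finset.sum_nonneg fun i _ => Real.rpow_nonneg ((hW y).1 i) _) hs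
          (by positivity)
      have hsumN : Summable (fun y => q y * N y) :=
        Summable.of_nonneg_of_le (fun y => mul_nonneg (hq0 y) (hN0 y))
          (fun y => mul_le_of_le_one_right (hq0 y) (hNle1 y)) hqsum
      have hstep3 : K ^ (1/α) ≤ (Kc*A) * Sb + (Kc*B) * (1 - Sb) := by
        have hBA : B ≤ A := AB_gt hL hLM hε0 hε1 hgt
        rw [← hfin]
        exact arith_key_gt hKc0 hBA herr'
      have hTge : K ^ (1/α) ≤ ∑' y, q y * N y := by
        calc K ^ (1/α) ≤ (Kc*A) * Sb + (Kc*B) * (1 - Sb) := hstep3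
          _ = ∑' y, q y * (Kc * (A * σ y + B * (1 - σ y))) := hstep2.symm
          _ ≤ ∑' y, q y * N y := Summable.tsum_le_tsum hper hsum2 hsumN
      have hlog : (1/α) * Real.log K ≤ Real.log (∑' y, q y * N y) := by
        have h2 := Real.log_le_log (Real.rpow_pos_of_pos hKpos _) hTge
        rwa [Real.log_rpow hKpos] at h2
      rw [harN]
      have hcoef : α / (1-α) ≤ 0 :=
        div_nonpos_of_nonneg_of_nonpos hα0.le (by linarith)
      calc (α/(1-α)) * Real.log (∑' y, q y * N y)
          ≤ (α/(1-α)) * ((1/α) * Real.log K) := mul_le_mul_of_nonpos_left hlog hcoef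
        _ = (1/(1-α)) * Real.log K := by
            field_simp
  · -- achievability
    set Wd : ℕ → ℝ := fun x => if x ∈ Finset.Icc 1 L then (1-ε)/(L:ℝ)
      else if x ∈ Finset.Icc (L+1) M then ε/((M:ℝ)-L) else 0 with hWdd
    have hWd0 : ∀ x, 0 ≤ Wd x := by
      intro x
      rw [hWdd]; dsimp only
      split
      · exact div_nonneg ha.le hL'.le
      · split
        · exact div_nonneg hε0 hML.le
        · exact le_refl 0
    have houtd : ∀ x ∉ Finset.Icc 1 M, Wd x = 0 := by
      intro x hx
      have h1 : x ∉ Finset.Icc 1 L := by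
        intro h
        have := Finset.mem_Icc.1 h
        exact hx (Finset.mem_Icc.2 ⟨this.1, le_trans this.2 hLM.le⟩)
      have h2 : x ∉ Finset.Icc (L+1) M := by
        intro h
        have := Finset.mem_Icc.1 h
        exact hx (Finset.mem_Icc.2 ⟨by omega, this.2⟩)
      rw [hWdd]; dsimp only
      rw [if_neg h1, if_neg h2]
    have hIoc1 : Finset.Icc 1 M = Finset.Ioc 0 M := by
      ext x; simp [Finset.mem_Icc, Finset.mem_Ioc]; omega
    have hIoc2 : Finset.Icc 1 L = Finset.Ioc 0 L := by
      ext x; simp [Finset.mem_Icc, Finset.mem_Ioc]; omega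
    have hIoc3 : Finset.Icc (L+1) M = Finset.Ioc L M := by
      ext x; simp [Finset.mem_Icc, Finset.mem_Ioc]
    have hcard1 : (Finset.Icc 1 L).card = L := by simp
    have hcard2 : ((Finset.Icc (L+1) M).card : ℝ) = (M:ℝ) - L := by
      rw [Nat.card_Icc]
      have : M + 1 - (L + 1) = M - L := by omega
      rw [this, Nat.cast_sub hLM.le]
    have hsplitI : ∀ f : ℕ → ℝ,
        ∑ x ∈ Finset.Icc 1 M, f x
          = ∑ x ∈ Finset.Icc 1 L, f x + ∑ x ∈ Finset.Icc (L+1) M, f x := by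
      intro f
      rw [hIoc1, hIoc2, hIoc3, Finset.sum_Ioc_consecutive f (Nat.zero_le L) hLM.le]
    have hval1 : ∀ x ∈ Finset.Icc 1 L, Wd x = (1-ε)/(L:ℝ) := by
      intro x hx; rw [hWdd]; dsimp only; rw [if_pos hx]
    have hval2 : ∀ x ∈ Finset.Icc (L+1) M, Wd x = ε/((M:ℝ)-L) := by
      intro x hx
      have h1 : x ∉ Finset.Icc 1 L := by
        have := Finset.mem_Icc.1 hx
        intro h; have h2 := Finset.mem_Icc.1 h; omega
      rw [hWdd]; dsimp only; rw [if_neg h1, if_pos hx]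
    have hsum1 : ∑ x ∈ Finset.Icc 1 L, Wd x = 1 - ε := by
      rw [Finset.sum_congr rfl hval1, Finset.sum_const, hcard1, nsmul_eq_mul,
        mul_div_cancel₀ _ hL'.ne']
    have hsum2 : ∑ x ∈ Finset.Icc (L+1) M, Wd x = ε := by
      rw [Finset.sum_congr rfl hval2, Finset.sum_const, nsmul_eq_mul, hcard2,
        mul_div_cancel₀ _ hML.ne']
    have hsumI : ∑ x ∈ Finset.Icc 1 M, Wd x = 1 := by
      rw [hsplitI Wd, hsum1, hsum2]; ring
    have hpmfW : IsPmf Wd := ⟨hWd0, by rw [tsum_eq_sum houtd]; exact hsumI⟩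
    have htsU : ∀ (f : Unit → ℝ), ∑' u, f u = f () := fun f =>
      tsum_eq_single () (fun b hb => absurd (Subsingleton.elim b ()) hb)
    have hKval : ∑' x, Wd x ^ α = K := by
      rw [tsum_eq_sum (s := Finset.Icc 1 M)
        (fun x hx => by rw [houtd x hx, Real.zero_rpow hα0.ne']),
        hsplitI (fun x => Wd x ^ α)]
      have e1 : ∑ x ∈ Finset.Icc 1 L, Wd x ^ α = (L:ℝ) * ((1-ε)/(L:ℝ)) ^ α := by
        rw [Finset.sum_congr rfl (fun x hx => by rw [hval1 x hx]),
          Finset.sum_const, hcard1, nsmul_eq_mul]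
      have e2 : ∑ x ∈ Finset.Icc (L+1) M, Wd x ^ α
          = ((M:ℝ)-L) * (ε/((M:ℝ)-L)) ^ α := by
        rw [Finset.sum_congr rfl (fun x hx => by rw [hval2 x hx]),
          Finset.sum_const, nsmul_eq_mul, hcard2]
      rw [e1, e2, aux_const_sum hα0 ha.le hL', aux_const_sum hα0 hε0 hML, hK]
    refine ⟨Unit, fun _ => 1, fun _ => Wd, ⟨fun _ => zero_le_one, by
        rw [htsU]⟩, fun _ => hpmfW, ?_, ?_, ?_⟩
    · intro y x h
      by_contra hc
      exact h (houtd x (fun hmem => hc (Finset.mem_Icc.1 hmem)))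
    · rw [htsU, one_mul]
      obtain ⟨-, -, -, -, hmax⟩ := topSum_exists hLM.le Wd hWd0 houtd
      have h1 := hmax (Finset.Icc 1 L) hcard1
      rw [hsum1] at h1
      linarith
    · have harid : arimoto α (fun _ : Unit => (1:ℝ)) (fun _ => Wd)
          = (α/(1-α)) * Real.log ((∑' x, Wd x ^ α) ^ (1/α)) := by
        rw [arimoto, htsU, one_mul]
      rw [harid, hKval, Real.log_rpow hKpos]
      field_simp
end
end

section
/- Let Q be a probability distribution on a countably infinite alphabet and 0 ≤ δ ≤ 1 − Q↓(1). Then the minimum of the Shannon entropy H(R) over all probability distributions R with total variation distance d(Q, R) ≤ δ equals H(S), where S is obtained from Q↓ by adding δ to the largest mass and truncating the tail: S(1) = Q↓(1) + δ, S(x) = Q↓(x) for 1 < x < B, S(B) = ∑_{k≥B} Q↓(k) − δ, S(x) = 0 for x > B, with B = sup{ b ≥ 1 : ∑_{k≥b} Q↓(k) ≥ δ }. -/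
noncomputable section
open scoped Classical

/-- Shannon entropy, valued in `[0,∞]`. -/
def entE (p : ℕ → ℝ) : ENNReal := ∑' x, ENNReal.ofReal (Real.negMulLog (p x))

/-- Total variation distance. -/
def tvDist (p q : ℕ → ℝ) : ℝ := (1 / 2) * ∑' x, |p x - q x|

/-- `B := sup{b ≥ 1 | ∑_{k ≥ b} Q↓(k) ≥ δ}`. -/
def truncB (d : ℕ → ℝ) (δ : ℝ) : ℕ∞ :=
  sSup {b : ℕ∞ | ∃ n : ℕ, b = (n : ℕ∞) ∧ 1 ≤ n ∧ δ ≤ ∑' k, d (n + k)}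

/-- The entropy-minimizing distribution `S` obtained from `Q↓ = d` by adding
`δ` to the largest mass and truncating the tail at index `B`. -/
def truncS (d : ℕ → ℝ) (δ : ℝ) (x : ℕ) : ℝ :=
  if x = 1 then d 1 + δ
  else if (x : ℕ∞) < truncB d δ then d x
  else if (x : ℕ∞) = truncB d δ then (∑' k, d (x + k)) - δ
  else 0

namespace HY

lemma pmf_summable {p : ℕ → ℝ} (hp : IsPmf p) : Summable p := by
  by_contra h
  have h2 := hp.2
  rw [tsum_eq_zero_of_not_summable h] at h2
  norm_num at h2

lemma pmf_le_one {p : ℕ → ℝ} (hp : IsPmf p) (x : ℕ) : p x ≤ 1 := by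
  have h := Summable.le_tsum (pmf_summable hp) x (fun y _ => hp.1 y)
  rw [hp.2] at h
  exact h

lemma pmf_sum_le {p : ℕ → ℝ} (hp : IsPmf p) (s : Finset ℕ) : ∑ x ∈ s, p x ≤ 1 := by
  have h := Summable.sum_le_tsum s (fun x _ => hp.1 x) (pmf_summable hp)
  rwa [hp.2] at h

lemma topSum_bddAbove {p : ℕ → ℝ} (hp : IsPmf p) (k : ℕ) :
    BddAbove {t : ℝ | ∃ s : Finset ℕ, s.card = k ∧ t = ∑ x ∈ s, p x} := by
  refine ⟨1, ?_⟩
  rintro t ⟨s, _, rfl⟩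
  exact pmf_sum_le hp s

lemma le_topSum {p : ℕ → ℝ} (hp : IsPmf p) {k : ℕ} {s : Finset ℕ} (hs : s.card = k) :
    ∑ x ∈ s, p x ≤ topSum p k := le_csSup (topSum_bddAbove hp k) ⟨s, hs, rfl⟩

lemma topSum_le {p : ℕ → ℝ} {k : ℕ} {c : ℝ}
    (h : ∀ s : Finset ℕ, s.card = k → ∑ x ∈ s, p x ≤ c) : topSum p k ≤ c := by
  apply csSup_le
  · exact ⟨_, Finset.range k, Finset.card_range k, rfl⟩
  · rintro t ⟨s, hs, rfl⟩; exact h s hs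

lemma topSum_le_one {p : ℕ → ℝ} (hp : IsPmf p) (k : ℕ) : topSum p k ≤ 1 :=
  topSum_le (fun s _ => pmf_sum_le hp s)

lemma topSum_zero (p : ℕ → ℝ) : topSum p 0 = 0 := by
  have h : {t : ℝ | ∃ s : Finset ℕ, s.card = 0 ∧ t = ∑ x ∈ s, p x} = {0} := by
    ext t
    simp only [Set.mem_setOf_eq, Finset.card_eq_zero, Set.mem_singleton_iff]
    constructor
    · rintro ⟨s, rfl, rfl⟩; simp
    · rintro rfl; exact ⟨∅, rfl, by simp⟩
  rw [topSum, h, csSup_singleton]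

lemma topSum_nonneg {p : ℕ → ℝ} (hp : IsPmf p) (k : ℕ) : 0 ≤ topSum p k := by
  have := le_topSum hp (s := Finset.range k) (Finset.card_range k)
  refine le_trans (Finset.sum_nonneg fun x _ => hp.1 x) this

lemma sum_le_topSum_of_card_le {p : ℕ → ℝ} (hp : IsPmf p) {s : Finset ℕ} {k : ℕ}
    (h : s.card ≤ k) : ∑ x ∈ s, p x ≤ topSum p k := by
  obtain ⟨t, hst, htc⟩ := Infinite.exists_superset_card_eq s k h
  exact le_trans (Finset.sum_le_sum_of_subset_of_nonneg hst (fun x _ _ => hp.1 x))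
    (le_topSum hp htc)

lemma topSum_mono {p : ℕ → ℝ} (hp : IsPmf p) : Monotone (topSum p) := by
  intro a b hab
  apply topSum_le
  intro s hs
  exact sum_le_topSum_of_card_le hp (hs ▸ hab)

variable {Q d : ℕ → ℝ}

lemma d_eq (hd : IsDecRearr Q d) (n : ℕ) :
    d (n + 1) = topSum Q (n + 1) - topSum Q n := by
  have h1 := hd.2.2 (n + 1)
  have h2 := hd.2.2 n
  rw [Finset.sum_Icc_succ_top (Nat.le_add_left 1 n)] at h1
  linarith

lemma d_nonneg (hQ : IsPmf Q) (hd : IsDecRearr Q d) (k : ℕ) : 0 ≤ d k := by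
  cases k with
  | zero => rw [hd.1]
  | succ n =>
    rw [d_eq hd n]
    have := topSum_mono hQ (Nat.le_succ n)
    linarith

lemma sum_range_d (hd : IsDecRearr Q d) (n : ℕ) :
    ∑ i ∈ Finset.range (n + 1), d i = topSum Q n := by
  rw [Finset.range_eq_Ico,
    ← Finset.sum_Ico_consecutive d (Nat.zero_le 1) (Nat.succ_le_succ (Nat.zero_le n))]
  have h1 : Finset.Ico 1 (n + 1) = Finset.Icc 1 n := Finset.Ico_add_one_right_eq_Icc 1 n
  have h0 : ∑ i ∈ Finset.Ico 0 1, d i = 0 := by simp [hd.1]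
  rw [h1, h0, zero_add, hd.2.2]

lemma d_summable (hQ : IsPmf Q) (hd : IsDecRearr Q d) : Summable d := by
  apply summable_of_sum_range_le (c := 1) (d_nonneg hQ hd)
  intro n
  cases n with
  | zero => simp
  | succ m => rw [sum_range_d hd m]; exact topSum_le_one hQ m

lemma topSum_tendsto_one (hQ : IsPmf Q) :
    Filter.Tendsto (topSum Q) Filter.atTop (nhds 1) := by
  have h1 : Filter.Tendsto (fun n => ∑ i ∈ Finset.range n, Q i) Filter.atTop (nhds 1) := by
    have := (pmf_summable hQ).hasSum.tendsto_sum_nat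
    rwa [hQ.2] at this
  have h2 : Filter.Tendsto (fun n => ∑ i ∈ Finset.range n, Q i) Filter.atTop (nhds 1) := h1
  refine tendsto_of_tendsto_of_tendsto_of_le_of_le h1 tendsto_const_nhds ?_ ?_
  · intro n
    exact sum_le_topSum_of_card_le hQ (le_of_eq (Finset.card_range n))
  · intro n; exact topSum_le_one hQ n

lemma tsum_d (hQ : IsPmf Q) (hd : IsDecRearr Q d) : ∑' i, d i = 1 := by
  have hs : Filter.Tendsto (fun n => ∑ i ∈ Finset.range n, d i) Filter.atTop (nhds (∑' i, d i)) :=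
    (d_summable hQ hd).hasSum.tendsto_sum_nat
  have hs2 : Filter.Tendsto (fun n => ∑ i ∈ Finset.range (n + 1), d i) Filter.atTop
      (nhds (∑' i, d i)) := hs.comp (Filter.tendsto_add_atTop_nat 1)
  have hs3 : Filter.Tendsto (topSum Q) Filter.atTop (nhds (∑' i, d i)) := by
    apply hs2.congr
    intro n; exact sum_range_d hd n
  exact tendsto_nhds_unique hs3 (topSum_tendsto_one hQ)

/-- Tail sums of `d`. -/
def tailD (d : ℕ → ℝ) (n : ℕ) : ℝ := ∑' k, d (n + k)

lemma tail_eq (hQ : IsPmf Q) (hd : IsDecRearr Q d) (n : ℕ) :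
    tailD d n = 1 - ∑ i ∈ Finset.range n, d i := by
  have h1 : tailD d n = ∑' k, d (k + n) := tsum_congr fun k => by rw [Nat.add_comm]
  have h2 := Summable.sum_add_tsum_nat_add n (d_summable hQ hd)
  rw [tsum_d hQ hd] at h2
  rw [h1]; linarith

lemma tail_nonneg (hQ : IsPmf Q) (hd : IsDecRearr Q d) (n : ℕ) : 0 ≤ tailD d n :=
  tsum_nonneg fun k => d_nonneg hQ hd _

lemma tail_succ (hQ : IsPmf Q) (hd : IsDecRearr Q d) (n : ℕ) :
    tailD d n = d n + tailD d (n + 1) := by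
  rw [tail_eq hQ hd, tail_eq hQ hd, Finset.sum_range_succ]; ring

lemma tail_anti (hQ : IsPmf Q) (hd : IsDecRearr Q d) {m n : ℕ} (h : m ≤ n) :
    tailD d n ≤ tailD d m := by
  rw [tail_eq hQ hd, tail_eq hQ hd]
  have : ∑ i ∈ Finset.range m, d i ≤ ∑ i ∈ Finset.range n, d i :=
    Finset.sum_le_sum_of_subset_of_nonneg (Finset.range_subset_range.2 h)
      (fun x _ _ => d_nonneg hQ hd x)
  linarith

lemma tail_one (hQ : IsPmf Q) (hd : IsDecRearr Q d) : tailD d 1 = 1 := by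
  rw [tail_eq hQ hd]; simp [hd.1]

lemma tail_two (hQ : IsPmf Q) (hd : IsDecRearr Q d) : tailD d 2 = 1 - d 1 := by
  rw [tail_eq hQ hd]
  have : ∑ i ∈ Finset.range 2, d i = d 0 + d 1 := by
    rw [Finset.sum_range_succ, Finset.sum_range_one]
  rw [this, hd.1]; ring

lemma tail_tendsto_zero (hQ : IsPmf Q) (hd : IsDecRearr Q d) :
    Filter.Tendsto (tailD d) Filter.atTop (nhds 0) := by
  have h1 : Filter.Tendsto (fun n => ∑ i ∈ Finset.range n, d i) Filter.atTop (nhds 1) := by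
    have := (d_summable hQ hd).hasSum.tendsto_sum_nat
    rwa [tsum_d hQ hd] at this
  have h2 : Filter.Tendsto (fun n => 1 - ∑ i ∈ Finset.range n, d i) Filter.atTop
      (nhds (1 - 1)) := tendsto_const_nhds.sub h1
  simp only [sub_self] at h2
  exact h2.congr fun n => (tail_eq hQ hd n).symm

end HY


section StageTwo
namespace HY
open MeasureTheory Real Set

variable {Q R S : ℕ → ℝ} {δ : ℝ}

/-- Total variation distance (restated locally). -/
lemma max_eq_half_add_abs (a : ℝ) : max a 0 = (a + |a|) / 2 := by
  rcases abs_cases a with ⟨h1, h2⟩ | ⟨h1, h2⟩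
  · rw [max_eq_left h2, h1]; ring
  · rw [max_eq_right (le_of_lt h2), h1]; ring

lemma tsum_pos_part_le (hQ : IsPmf Q) (hR : IsPmf R)
    (hTV : (1 / 2) * ∑' x, |Q x - R x| ≤ δ) :
    ∑' x, max (R x - Q x) 0 ≤ δ := by
  have hsub : Summable (fun x => R x - Q x) := (pmf_summable hR).sub (pmf_summable hQ)
  have habs : Summable (fun x => |R x - Q x|) := hsub.abs
  have h0 : ∑' x, (R x - Q x) = 0 := by
    rw [Summable.tsum_sub (pmf_summable hR) (pmf_summable hQ), hR.2, hQ.2, sub_self]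
  have h1 : ∑' x, max (R x - Q x) 0 = ∑' x, ((R x - Q x) + |R x - Q x|) / 2 :=
    tsum_congr fun x => max_eq_half_add_abs _
  rw [h1, tsum_div_const, Summable.tsum_add hsub habs, h0, zero_add]
  have h2 : ∑' x, |R x - Q x| = ∑' x, |Q x - R x| := tsum_congr fun x => abs_sub_comm _ _
  rw [h2]
  linarith

lemma topSum_R_le (hQ : IsPmf Q) (hR : IsPmf R)
    (hTV : (1 / 2) * ∑' x, |Q x - R x| ≤ δ) (k : ℕ) :
    topSum R k ≤ topSum Q k + δ := by
  apply topSum_le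
  intro s hs
  have h1 : ∑ x ∈ s, R x = ∑ x ∈ s, Q x + ∑ x ∈ s, (R x - Q x) := by
    rw [← Finset.sum_add_distrib]; apply Finset.sum_congr rfl; intros; ring
  have h2 : ∑ x ∈ s, (R x - Q x) ≤ ∑ x ∈ s, max (R x - Q x) 0 :=
    Finset.sum_le_sum fun x _ => le_max_left _ _
  have hmaxsum : Summable (fun x => max (R x - Q x) 0) := by
    apply Summable.of_nonneg_of_le (fun x => le_max_right _ _) (fun x => ?_)
      ((pmf_summable hR).add (pmf_summable hQ))
    rcases le_or_gt (R x - Q x) 0 with h | h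
    · rw [max_eq_right h]; have := hR.1 x; have := hQ.1 x; positivity
    · rw [max_eq_left (le_of_lt h)]; have := hQ.1 x; linarith [hQ.1 x]
  have h3 : ∑ x ∈ s, max (R x - Q x) 0 ≤ ∑' x, max (R x - Q x) 0 :=
    Summable.sum_le_tsum s (fun x _ => le_max_right _ _) hmaxsum
  have h4 := tsum_pos_part_le hQ hR hTV
  have h5 := le_topSum hQ hs
  linarith

/-! ### Integral representation of `negMulLog` -/

lemma g_nonneg {c t : ℝ} (hc0 : 0 ≤ c) (hc1 : c ≤ 1) (ht0 : 0 < t) (ht1 : t ≤ 1) :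
    0 ≤ min c t / t - c := by
  rw [sub_nonneg, le_div_iff₀ ht0]
  rcases min_cases c t with ⟨h, _⟩ | ⟨h, _⟩
  · rw [h]; nlinarith
  · rw [h]; nlinarith

lemma g_meas (c : ℝ) : Measurable fun t : ℝ => ENNReal.ofReal (min c t / t - c) := by
  apply ENNReal.measurable_ofReal.comp
  exact ((measurable_const.min measurable_id).div measurable_id).sub measurable_const

lemma integrableOn_g {c : ℝ} (hc0 : 0 ≤ c) (hc1 : c ≤ 1) :
    IntegrableOn (fun t : ℝ => min c t / t - c) (Set.Ioc (0:ℝ) 1) := by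
  rcases eq_or_lt_of_le hc0 with rfl | hc
  · apply (integrableOn_const ?_).congr_fun (f := fun _ => (0:ℝ)) ?_ measurableSet_Ioc
    · simp [Real.volume_Ioc]
    · intro t ht
      have : min (0:ℝ) t = 0 := min_eq_left (le_of_lt ht.1)
      simp [this]
  · have hsplit : Set.Ioc (0:ℝ) 1 = Set.Ioc 0 c ∪ Set.Ioc c 1 :=
      (Set.Ioc_union_Ioc_eq_Ioc (le_of_lt hc) hc1).symm
    rw [hsplit]
    apply IntegrableOn.union
    · apply (integrableOn_const ?_).congr_fun (f := fun _ => (1 - c : ℝ)) ?_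
        measurableSet_Ioc
      · rw [Real.volume_Ioc]; exact ENNReal.ofReal_ne_top
      · intro t ht
        have h1 : min c t = t := min_eq_right ht.2
        simp only [h1]
        rw [div_self (ne_of_gt ht.1)]
    · have hcont : ContinuousOn (fun t : ℝ => min c t / t - c) (Set.Icc c 1) := by
        apply ContinuousOn.sub ?_ continuousOn_const
        apply ContinuousOn.div (Continuous.continuousOn (continuous_const.min continuous_id)) continuousOn_id
        intro t ht
        exact ne_of_gt (lt_of_lt_of_le hc ht.1)
      exact (hcont.integrableOn_Icc).mono_set Set.Ioc_subset_Icc_self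

lemma integral_g {c : ℝ} (hc0 : 0 ≤ c) (hc1 : c ≤ 1) :
    ∫ t in Set.Ioc (0:ℝ) 1, (min c t / t - c) = Real.negMulLog c := by
  rcases eq_or_lt_of_le hc0 with rfl | hc
  · rw [Real.negMulLog_zero]
    rw [setIntegral_congr_fun measurableSet_Ioc (g := fun _ => (0:ℝ))]
    · simp
    · intro t ht
      have : min (0:ℝ) t = 0 := min_eq_left (le_of_lt ht.1)
      simp [this]
  · have hsplit : Set.Ioc (0:ℝ) 1 = Set.Ioc 0 c ∪ Set.Ioc c 1 :=
      (Set.Ioc_union_Ioc_eq_Ioc (le_of_lt hc) hc1).symm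
    have hdisj : Disjoint (Set.Ioc (0:ℝ) c) (Set.Ioc c 1) := Set.Ioc_disjoint_Ioc_of_le le_rfl
    have hsplit2 : Set.Ioc (0:ℝ) 1 = Set.Ioc 0 c ∪ Set.Ioc c 1 := hsplit
    have hint1 : IntegrableOn (fun t : ℝ => min c t / t - c) (Set.Ioc (0:ℝ) c) := by
      have := integrableOn_g hc0 hc1
      exact this.mono_set (by rw [hsplit]; exact Set.subset_union_left)
    have hint2 : IntegrableOn (fun t : ℝ => min c t / t - c) (Set.Ioc c (1:ℝ)) := by
      have := integrableOn_g hc0 hc1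
      exact this.mono_set (by rw [hsplit]; exact Set.subset_union_right)
    rw [hsplit, setIntegral_union hdisj measurableSet_Ioc hint1 hint2]
    have hI1 : ∫ t in Set.Ioc (0:ℝ) c, (min c t / t - c) = c * (1 - c) := by
      rw [setIntegral_congr_fun measurableSet_Ioc (g := fun _ => (1 - c : ℝ))]
      · rw [setIntegral_const]
        rw [Real.volume_real_Ioc]
        rw [max_eq_left (by linarith)]
        simp only [smul_eq_mul]
        ring
      · intro t ht
        have h1 : min c t = t := min_eq_right ht.2
        simp only [h1]
        rw [div_self (ne_of_gt ht.1)]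
    have hI2 : ∫ t in Set.Ioc c (1:ℝ), (min c t / t - c) = c * (- Real.log c) - c * (1 - c) := by
      rw [setIntegral_congr_fun measurableSet_Ioc (g := fun t : ℝ => c * t⁻¹ - c)]
      · have hioc : ∫ t in Set.Ioc c (1:ℝ), (c * t⁻¹ - c) = ∫ t in c..1, (c * t⁻¹ - c) :=
          (intervalIntegral.integral_of_le hc1).symm
        rw [hioc]
        have hiint : IntervalIntegrable (fun t : ℝ => t⁻¹) MeasureTheory.volume c 1 := by
          apply ContinuousOn.intervalIntegrable
          apply ContinuousOn.inv₀ continuousOn_id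
          intro t ht
          rw [Set.uIcc_of_le hc1] at ht
          exact ne_of_gt (lt_of_lt_of_le hc ht.1)
        rw [intervalIntegral.integral_sub ((hiint.const_mul c)) intervalIntegrable_const]
        rw [intervalIntegral.integral_const_mul, integral_inv (by
          rw [Set.uIcc_of_le hc1]; intro h; exact absurd h.1 (not_le.2 hc))]
        rw [intervalIntegral.integral_const]
        rw [Real.log_div one_ne_zero (ne_of_gt hc), Real.log_one]
        simp only [smul_eq_mul]
        ring_nf
      · intro t ht
        have h1 : min c t = c := min_eq_left (le_of_lt ht.1)
        simp only [h1, div_eq_mul_inv]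
    rw [hI1, hI2, Real.negMulLog]
    ring

lemma lintegral_g {c : ℝ} (hc0 : 0 ≤ c) (hc1 : c ≤ 1) :
    ∫⁻ t in Set.Ioc (0:ℝ) 1, ENNReal.ofReal (min c t / t - c)
      = ENNReal.ofReal (Real.negMulLog c) := by
  have hnn : ∀ᵐ t ∂(MeasureTheory.volume.restrict (Set.Ioc (0:ℝ) 1)), 0 ≤ min c t / t - c := by
    rw [ae_restrict_iff' measurableSet_Ioc]
    exact Filter.Eventually.of_forall fun t ht => g_nonneg hc0 hc1 ht.1 ht.2
  rw [← integral_g hc0 hc1, ← ofReal_integral_eq_lintegral_ofReal (integrableOn_g hc0 hc1) hnn]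

end HY
end StageTwo


namespace HY
open MeasureTheory Real Set

variable {Q R S : ℕ → ℝ} {δ : ℝ}

lemma entE_rep {p : ℕ → ℝ} (hp : IsPmf p) :
    entE p = ∫⁻ t in Set.Ioc (0:ℝ) 1, ∑' x, ENNReal.ofReal (min (p x) t / t - p x) := by
  calc entE p = ∑' x, ∫⁻ t in Set.Ioc (0:ℝ) 1, ENNReal.ofReal (min (p x) t / t - p x) :=
        tsum_congr fun x => (lintegral_g (hp.1 x) (pmf_le_one hp x)).symm
    _ = ∫⁻ t in Set.Ioc (0:ℝ) 1, ∑' x, ENNReal.ofReal (min (p x) t / t - p x) :=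
        (lintegral_tsum fun x => (g_meas (p x)).aemeasurable).symm

lemma summable_maxpart {p : ℕ → ℝ} (hp : IsPmf p) {t : ℝ} (ht : 0 ≤ t) :
    Summable (fun x => max (p x - t) 0) := by
  apply Summable.of_nonneg_of_le (fun x => le_max_right _ _) (fun x => ?_) (pmf_summable hp)
  rcases le_or_gt (p x - t) 0 with h | h
  · rw [max_eq_right h]; exact hp.1 x
  · rw [max_eq_left (le_of_lt h)]; linarith

lemma summable_minpart {p : ℕ → ℝ} (hp : IsPmf p) {t : ℝ} (ht : 0 ≤ t) :
    Summable (fun x => min (p x) t) := by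
  apply Summable.of_nonneg_of_le (fun x => le_min (hp.1 x) ht) (fun x => min_le_left _ _)
    (pmf_summable hp)

/-- Level-sum comparison: if the top-`k` sums of `R` are dominated by the initial
sums of `S`, then the `t`-excess mass of `R` is dominated by that of `S`. -/
lemma maxpart_le (hR : IsPmf R) (hS : IsPmf S)
    (hts : ∀ k, topSum R k ≤ ∑ i ∈ Finset.Icc 1 k, S i) {t : ℝ} (ht : 0 < t) :
    ∑' x, max (R x - t) 0 ≤ ∑' x, max (S x - t) 0 := by
  apply Summable.tsum_le_of_sum_le (summable_maxpart hR (le_of_lt ht))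
  intro s
  classical
  set F := s.filter (fun x => t < R x) with hF
  have h1 : ∑ x ∈ s, max (R x - t) 0 = ∑ x ∈ F, (R x - t) := by
    rw [hF, Finset.sum_filter]
    apply Finset.sum_congr rfl
    intro x _
    rcases lt_or_ge t (R x) with h | h
    · simp [h, max_eq_left (by linarith : (0:ℝ) ≤ R x - t)]
    · simp [not_lt.2 h, max_eq_right (by linarith : R x - t ≤ (0:ℝ))]
  rw [h1, Finset.sum_sub_distrib, Finset.sum_const, nsmul_eq_mul]
  have h2 : ∑ x ∈ F, R x ≤ topSum R F.card := le_topSum hR rfl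
  have h3 := hts F.card
  have h4 : ∑ i ∈ Finset.Icc 1 F.card, S i - F.card * t
      = ∑ i ∈ Finset.Icc 1 F.card, (S i - t) := by
    rw [Finset.sum_sub_distrib, Finset.sum_const, Nat.card_Icc]
    simp [nsmul_eq_mul]
  have h5 : ∑ i ∈ Finset.Icc 1 F.card, (S i - t) ≤ ∑ i ∈ Finset.Icc 1 F.card, max (S i - t) 0 :=
    Finset.sum_le_sum fun i _ => le_max_left _ _
  have h6 : ∑ i ∈ Finset.Icc 1 F.card, max (S i - t) 0 ≤ ∑' x, max (S x - t) 0 :=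
    Summable.sum_le_tsum _ (fun x _ => le_max_right _ _) (summable_maxpart hS (le_of_lt ht))
  linarith

lemma minpart_ge (hR : IsPmf R) (hS : IsPmf S)
    (hts : ∀ k, topSum R k ≤ ∑ i ∈ Finset.Icc 1 k, S i) {t : ℝ} (ht : 0 < t) :
    ∑' x, min (S x) t ≤ ∑' x, min (R x) t := by
  have e : ∀ p : ℕ → ℝ, IsPmf p → ∑' x, min (p x) t = 1 - ∑' x, max (p x - t) 0 := by
    intro p hp
    have h1 : ∀ x, min (p x) t = p x - max (p x - t) 0 := by
      intro x
      rcases le_total (p x) t with h | h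
      · rw [min_eq_left h, max_eq_right (by linarith)]; ring
      · rw [min_eq_right h, max_eq_left (by linarith)]; ring
    rw [tsum_congr h1, Summable.tsum_sub (pmf_summable hp) (summable_maxpart hp (le_of_lt ht)), hp.2]
  rw [e R hR, e S hS]
  have := maxpart_le hR hS hts ht
  linarith

lemma tsum_g_eq {p : ℕ → ℝ} (hp : IsPmf p) {t : ℝ} (ht0 : 0 < t) (ht1 : t ≤ 1) :
    ∑' x, ENNReal.ofReal (min (p x) t / t - p x)
      = ENNReal.ofReal ((∑' x, min (p x) t) / t - 1) := by
  have hnn : ∀ x, 0 ≤ min (p x) t / t - p x :=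
    fun x => g_nonneg (hp.1 x) (pmf_le_one hp x) ht0 ht1
  have hsum : Summable (fun x => min (p x) t / t - p x) :=
    (((summable_minpart hp (le_of_lt ht0)).div_const t)).sub (pmf_summable hp)
  rw [← ENNReal.ofReal_tsum_of_nonneg hnn hsum]
  congr 1
  rw [Summable.tsum_sub ((summable_minpart hp (le_of_lt ht0)).div_const t) (pmf_summable hp), hp.2,
    tsum_div_const]

/-- Main comparison lemma (Schur concavity via level sets). -/
lemma entE_le_of_topSum_le (hR : IsPmf R) (hS : IsPmf S)
    (hts : ∀ k, topSum R k ≤ ∑ i ∈ Finset.Icc 1 k, S i) :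
    entE S ≤ entE R := by
  rw [entE_rep hS, entE_rep hR]
  apply lintegral_mono_ae
  rw [ae_restrict_iff' measurableSet_Ioc]
  apply Filter.Eventually.of_forall
  intro t ht
  rw [tsum_g_eq hS ht.1 ht.2, tsum_g_eq hR ht.1 ht.2]
  apply ENNReal.ofReal_le_ofReal
  have := minpart_ge hR hS hts ht.1
  have h2 : (∑' x, min (S x) t) / t ≤ (∑' x, min (R x) t) / t :=
    (div_le_div_iff_of_pos_right ht.1).2 this
  linarith

end HY


namespace HY

variable {Q : ℕ → ℝ}

lemma exists_argmax (hQsum : Summable Q) (hQ0 : ∀ x, 0 ≤ Q x) (s : Finset ℕ) :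
    ∃ x, x ∉ s ∧ ∀ y, y ∉ s → Q y ≤ Q x := by
  by_cases h : ∃ y, y ∉ s ∧ 0 < Q y
  · obtain ⟨y₀, hy₀s, hy₀⟩ := h
    have hfin : {y : ℕ | Q y₀ ≤ Q y}.Finite := by
      have h1 : ∀ᶠ y in Filter.cofinite, Q y < Q y₀ :=
        hQsum.tendsto_cofinite_zero (Iio_mem_nhds hy₀)
      have h2 : {y : ℕ | ¬ Q y < Q y₀}.Finite := h1
      apply h2.subset
      intro y hy
      simp only [Set.mem_setOf_eq] at hy ⊢
      exact not_lt.2 hy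
    classical
    set F := hfin.toFinset.filter (fun y => y ∉ s) with hFdef
    have hy₀F : y₀ ∈ F := by
      rw [hFdef, Finset.mem_filter, Set.Finite.mem_toFinset]
      exact ⟨Set.mem_setOf_eq ▸ le_refl _, hy₀s⟩
    obtain ⟨x, hxF, hmax⟩ := F.exists_max_image Q ⟨y₀, hy₀F⟩
    rw [hFdef, Finset.mem_filter] at hxF
    refine ⟨x, hxF.2, ?_⟩
    intro y hy
    rcases le_or_gt (Q y₀) (Q y) with h' | h'
    · apply hmax
      rw [hFdef, Finset.mem_filter, Set.Finite.mem_toFinset]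
      exact ⟨Set.mem_setOf_eq ▸ h', hy⟩
    · have hx' : Q y₀ ≤ Q x := hmax y₀ hy₀F
      linarith
  · push_neg at h
    obtain ⟨x, hx⟩ := Infinite.exists_notMem_finset s
    refine ⟨x, hx, fun y hy => ?_⟩
    exact le_trans (h y hy) (hQ0 x)

/-- Greedy chain of maximizing finsets. -/
def chainQ (Q : ℕ → ℝ) (hQsum : Summable Q) (hQ0 : ∀ x, 0 ≤ Q x) : ℕ → Finset ℕ
  | 0 => ∅
  | k + 1 =>
    insert (Classical.choose (exists_argmax hQsum hQ0 (chainQ Q hQsum hQ0 k)))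
      (chainQ Q hQsum hQ0 k)

/-- Greedy enumeration of `Q` in decreasing order of mass. -/
def tauQ (Q : ℕ → ℝ) (hQsum : Summable Q) (hQ0 : ∀ x, 0 ≤ Q x) (k : ℕ) : ℕ :=
  Classical.choose (exists_argmax hQsum hQ0 (chainQ Q hQsum hQ0 k))

variable {hQsum : Summable Q} {hQ0 : ∀ x, 0 ≤ Q x}

lemma tau_spec (k : ℕ) :
    tauQ Q hQsum hQ0 k ∉ chainQ Q hQsum hQ0 k ∧
      ∀ y, y ∉ chainQ Q hQsum hQ0 k → Q y ≤ Q (tauQ Q hQsum hQ0 k) :=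
  Classical.choose_spec (exists_argmax hQsum hQ0 (chainQ Q hQsum hQ0 k))

lemma chain_succ (k : ℕ) :
    chainQ Q hQsum hQ0 (k + 1) = insert (tauQ Q hQsum hQ0 k) (chainQ Q hQsum hQ0 k) := rfl

lemma chain_card (k : ℕ) : (chainQ Q hQsum hQ0 k).card = k := by
  induction k with
  | zero => rfl
  | succ n ih =>
    rw [chain_succ, Finset.card_insert_of_notMem (tau_spec n).1, ih]

lemma chain_mono {k m : ℕ} (h : k ≤ m) : chainQ Q hQsum hQ0 k ⊆ chainQ Q hQsum hQ0 m := by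
  induction m with
  | zero => rw [Nat.le_zero] at h; subst h; exact subset_rfl
  | succ n ih =>
    rcases Nat.lt_or_ge k (n + 1) with h' | h'
    · have := ih (Nat.lt_succ_iff.1 h')
      rw [chain_succ]
      exact this.trans (Finset.subset_insert _ _)
    · have : k = n + 1 := le_antisymm h h'
      subst this; exact subset_rfl

lemma chain_eq_image (k : ℕ) :
    chainQ Q hQsum hQ0 k = (Finset.range k).image (tauQ Q hQsum hQ0) := by
  induction k with
  | zero => rfl
  | succ n ih =>
    rw [chain_succ, ih, Finset.range_add_one, Finset.image_insert]

lemma tau_mem_chain {i k : ℕ} (h : i < k) : tauQ Q hQsum hQ0 i ∈ chainQ Q hQsum hQ0 k := by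
  rw [chain_eq_image]
  exact Finset.mem_image_of_mem _ (Finset.mem_range.2 h)

lemma tau_inj : Function.Injective (tauQ Q hQsum hQ0) := by
  intro i j hij
  by_contra h
  rcases Nat.lt_or_ge i j with h' | h'
  · exact (tau_spec j).1 (hij ▸ tau_mem_chain h')
  · have h'' : j < i := lt_of_le_of_ne h' (Ne.symm h)
    exact (tau_spec i).1 (hij ▸ tau_mem_chain h'')

lemma chain_greedy {k : ℕ} : ∀ x ∉ chainQ Q hQsum hQ0 k, ∀ y ∈ chainQ Q hQsum hQ0 k, Q x ≤ Q y := by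
  intro x hx y hy
  rw [chain_eq_image] at hy
  obtain ⟨i, hi, rfl⟩ := Finset.mem_image.1 hy
  rw [Finset.mem_range] at hi
  apply (tau_spec i).2
  intro hxi
  exact hx (chain_mono (le_of_lt hi) hxi)

lemma greedy_optimal (hQ0' : ∀ x, 0 ≤ Q x) {s : Finset ℕ}
    (hgreedy : ∀ x ∉ s, ∀ y ∈ s, Q x ≤ Q y)
    {s' : Finset ℕ} (hc : s'.card = s.card) : ∑ x ∈ s', Q x ≤ ∑ x ∈ s, Q x := by
  classical
  have key : ∑ x ∈ s' \ s, Q x ≤ ∑ x ∈ s \ s', Q x := by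
    rcases (s \ s').eq_empty_or_nonempty with he | hne
    · have hsub : s ⊆ s' := by rwa [Finset.sdiff_eq_empty_iff_subset] at he
      have heq : s' = s := (Finset.eq_of_subset_of_card_le hsub (le_of_eq hc)).symm
      rw [heq]
    · obtain ⟨b, hb, hbmin⟩ := (s \ s').exists_min_image Q hne
      have hb1 : b ∈ s := (Finset.mem_sdiff.1 hb).1
      have hcards : (s' \ s).card = (s \ s').card := Finset.card_sdiff_comm hc
      calc ∑ x ∈ s' \ s, Q x ≤ (s' \ s).card • Q b := by
            apply Finset.sum_le_card_nsmul
            intro x hx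
            exact hgreedy x (Finset.mem_sdiff.1 hx).2 b hb1
        _ = (s \ s').card • Q b := by rw [hcards]
        _ ≤ ∑ x ∈ s \ s', Q x := Finset.card_nsmul_le_sum _ _ _ hbmin
  have h1 : ∑ x ∈ s', Q x = ∑ x ∈ s' ∩ s, Q x + ∑ x ∈ s' \ s, Q x :=
    (Finset.sum_inter_add_sum_sdiff s' s Q).symm
  have h2 : ∑ x ∈ s, Q x = ∑ x ∈ s ∩ s', Q x + ∑ x ∈ s \ s', Q x :=
    (Finset.sum_inter_add_sum_sdiff s s' Q).symm
  rw [Finset.inter_comm] at h1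
  linarith

lemma chain_sum (hQ : IsPmf Q) (hQsum : Summable Q) (hQ0 : ∀ x, 0 ≤ Q x) (k : ℕ) :
    ∑ x ∈ chainQ Q hQsum hQ0 k, Q x = topSum Q k := by
  apply le_antisymm (le_topSum hQ (chain_card k))
  apply topSum_le
  intro s hs
  exact greedy_optimal hQ0 chain_greedy (by rw [hs, chain_card])

lemma tau_val {d : ℕ → ℝ} (hQ : IsPmf Q) (hd : IsDecRearr Q d)
    (hQsum : Summable Q) (hQ0 : ∀ x, 0 ≤ Q x) (k : ℕ) :
    Q (tauQ Q hQsum hQ0 k) = d (k + 1) := by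
  have h1 := chain_sum hQ hQsum hQ0 (k + 1)
  have h2 := chain_sum hQ hQsum hQ0 k
  rw [chain_succ, Finset.sum_insert (tau_spec k).1] at h1
  rw [d_eq hd k]
  linarith

lemma tau_coverage {d : ℕ → ℝ} (hQ : IsPmf Q) (hd : IsDecRearr Q d)
    (hQsum : Summable Q) (hQ0 : ∀ x, 0 ≤ Q x) :
    ∀ x, x ∉ Set.range (tauQ Q hQsum hQ0) → Q x = 0 := by
  intro x hx
  by_contra h
  have hpos : 0 < Q x := lt_of_le_of_ne (hQ0 x) (Ne.symm h)
  have hxchain : ∀ k, x ∉ chainQ Q hQsum hQ0 k := by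
    intro k hk
    rw [chain_eq_image] at hk
    obtain ⟨i, _, hi⟩ := Finset.mem_image.1 hk
    exact hx ⟨i, hi⟩
  have hle : ∀ k, Q x ≤ d (k + 1) := by
    intro k
    have := (tau_spec k).2 x (hxchain k)
    rwa [tau_val hQ hd hQsum hQ0 k] at this
  have hd0 : Filter.Tendsto (fun k => d (k + 1)) Filter.atTop (nhds 0) :=
    (d_summable hQ hd).tendsto_atTop_zero.comp (Filter.tendsto_add_atTop_nat 1)
  have : Q x ≤ 0 := ge_of_tendsto' hd0 hle
  linarith

end HY


namespace HY

variable {Q d : ℕ → ℝ} {δ : ℝ}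

lemma truncB_tail_eq (d : ℕ → ℝ) (δ : ℝ) :
    truncB d δ = sSup {b : ℕ∞ | ∃ n : ℕ, b = (n : ℕ∞) ∧ 1 ≤ n ∧ δ ≤ tailD d n} := rfl

/-- When `δ = 0`, the truncation point is `⊤`. -/
lemma truncB_zero (hQ : IsPmf Q) (hd : IsDecRearr Q d) : truncB d 0 = ⊤ := by
  rw [truncB_tail_eq]
  rw [sSup_eq_top]
  intro b hb
  lift b to ℕ using hb.ne
  refine ⟨((b + 1 : ℕ) : ℕ∞), ⟨b + 1, rfl, Nat.succ_le_succ (Nat.zero_le b), tail_nonneg hQ hd _⟩, ?_⟩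
  exact_mod_cast Nat.lt_succ_self b

lemma truncS_zero (hQ : IsPmf Q) (hd : IsDecRearr Q d) : truncS d 0 = d := by
  funext x
  rw [truncS, truncB_zero hQ hd]
  rcases eq_or_ne x 1 with rfl | hx1
  · simp
  · rw [if_neg hx1, if_pos]
    exact lt_of_le_of_ne le_top (by simp)

/-- For `δ > 0`, existence of the (finite) truncation point. -/
lemma exists_N (hQ : IsPmf Q) (hd : IsDecRearr Q d) (hδ : 0 < δ) (hδ1 : δ ≤ 1 - d 1) :
    ∃ N : ℕ, 2 ≤ N ∧ δ ≤ tailD d N ∧ tailD d (N + 1) < δ ∧ truncB d δ = (N : ℕ∞) := by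
  set V : Set ℕ := {n : ℕ | 1 ≤ n ∧ δ ≤ tailD d n} with hV
  have h2V : 2 ∈ V := ⟨one_le_two, by rw [tail_two hQ hd]; exact hδ1⟩
  have hbdd : BddAbove V := by
    have hev : ∀ᶠ n in Filter.atTop, tailD d n < δ :=
      (tail_tendsto_zero hQ hd).eventually_lt_const hδ
    obtain ⟨M, hM⟩ := hev.exists_forall_of_atTop
    refine ⟨M, fun n hn => ?_⟩
    by_contra hc
    push_neg at hc
    exact absurd hn.2 (not_le.2 (hM n (le_of_lt hc)))
  set N := sSup V with hN
  have hNmem : N ∈ V := Nat.sSup_mem ⟨2, h2V⟩ hbdd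
  have hN2 : 2 ≤ N := le_csSup hbdd h2V
  have hNs : tailD d (N + 1) < δ := by
    by_contra hc
    push_neg at hc
    have : N + 1 ∈ V := ⟨Nat.succ_le_succ (Nat.zero_le N), hc⟩
    have := le_csSup hbdd this
    omega
  refine ⟨N, hN2, hNmem.2, hNs, ?_⟩
  rw [truncB_tail_eq]
  apply le_antisymm
  · apply sSup_le
    rintro b ⟨n, rfl, hn1, hn⟩
    have : n ≤ N := le_csSup hbdd ⟨hn1, hn⟩
    exact_mod_cast this
  · exact le_sSup ⟨N, rfl, le_trans one_le_two hN2, hNmem.2⟩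

section Spos

variable {N : ℕ}

/-- Explicit description of `truncS` when `truncB = N`. -/
lemma truncS_explicit (hB : truncB d δ = (N : ℕ∞)) (x : ℕ) :
    truncS d δ x = if x = 1 then d 1 + δ else if x < N then d x
      else if x = N then tailD d N - δ else 0 := by
  rw [truncS, hB]
  rcases eq_or_ne x 1 with rfl | hx1
  · simp
  · rw [if_neg hx1, if_neg hx1]
    rcases lt_or_ge x N with h | h
    · rw [if_pos (by exact_mod_cast h), if_pos h]
    · rw [if_neg (by exact_mod_cast not_lt.2 h), if_neg (not_lt.2 h)]
      rcases eq_or_ne x N with rfl | hxN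
      · rw [if_pos rfl, if_pos rfl]; rfl
      · rw [if_neg (by exact_mod_cast hxN), if_neg hxN]

lemma truncS_nonneg (hQ : IsPmf Q) (hd : IsDecRearr Q d) (hδ0 : 0 ≤ δ)
    (hB : truncB d δ = (N : ℕ∞)) (hNtail : δ ≤ tailD d N) (x : ℕ) :
    0 ≤ truncS d δ x := by
  rw [truncS_explicit hB]
  rcases eq_or_ne x 1 with rfl | hx1
  · rw [if_pos rfl]
    have := d_nonneg hQ hd 1; linarith
  · rw [if_neg hx1]
    rcases lt_or_ge x N with h | h
    · rw [if_pos h]; exact d_nonneg hQ hd x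
    · rw [if_neg (not_lt.2 h)]
      rcases eq_or_ne x N with rfl | hxN
      · rw [if_pos rfl]; linarith
      · rw [if_neg hxN]

/-- Initial sums of `truncS` for `1 ≤ k < N`. -/
lemma truncS_sum_lt (hB : truncB d δ = (N : ℕ∞)) {k : ℕ} (hk1 : 1 ≤ k) (hkN : k < N) :
    ∑ x ∈ Finset.Icc 1 k, truncS d δ x = ∑ x ∈ Finset.Icc 1 k, d x + δ := by
  have hcong : ∀ x ∈ Finset.Icc 1 k,
      truncS d δ x = d x + (if x = 1 then δ else 0) := by
    intro x hx
    rw [Finset.mem_Icc] at hx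
    rw [truncS_explicit hB]
    rcases eq_or_ne x 1 with rfl | hx1
    · simp
    · rw [if_neg hx1, if_pos (lt_of_le_of_lt hx.2 hkN), if_neg hx1, add_zero]
  rw [Finset.sum_congr rfl hcong, Finset.sum_add_distrib, Finset.sum_ite_eq' _ 1 (fun _ => δ)]
  rw [if_pos (Finset.mem_Icc.2 ⟨le_refl 1, hk1⟩)]

lemma truncS_sum_N (hQ : IsPmf Q) (hd : IsDecRearr Q d)
    (hB : truncB d δ = (N : ℕ∞)) (hN2 : 2 ≤ N) :
    ∑ x ∈ Finset.Icc 1 N, truncS d δ x = 1 := by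
  obtain ⟨m, rfl⟩ : ∃ m, N = m + 1 := ⟨N - 1, by omega⟩
  rw [Finset.sum_Icc_succ_top (Nat.le_add_left 1 m)]
  rw [truncS_sum_lt hB (by omega) (by omega)]
  have hSN : truncS d δ (m + 1) = tailD d (m + 1) - δ := by
    rw [truncS_explicit hB, if_neg (by omega), if_neg (by omega), if_pos rfl]
  rw [hSN]
  have htail : tailD d (m + 1) = 1 - ∑ i ∈ Finset.range (m + 1), d i := tail_eq hQ hd (m + 1)
  have hrange : ∑ i ∈ Finset.range (m + 1), d i = ∑ i ∈ Finset.Icc 1 m, d i := by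
    rw [sum_range_d hd m, ← hd.2.2 m]
  rw [htail, hrange]
  ring

lemma truncS_eq_zero_of_gt (hB : truncB d δ = (N : ℕ∞)) (hN2 : 2 ≤ N) {x : ℕ}
    (hx : N < x) : truncS d δ x = 0 := by
  rw [truncS_explicit hB, if_neg (by omega), if_neg (by omega), if_neg (by omega)]

lemma truncS_zero_val (hQ : IsPmf Q) (hd : IsDecRearr Q d) (hB : truncB d δ = (N : ℕ∞))
    (hN2 : 2 ≤ N) : truncS d δ 0 = 0 := by
  rw [truncS_explicit hB, if_neg (by omega), if_pos (by omega), hd.1]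

lemma truncS_pmf (hQ : IsPmf Q) (hd : IsDecRearr Q d) (hδ0 : 0 ≤ δ)
    (hB : truncB d δ = (N : ℕ∞)) (hN2 : 2 ≤ N) (hNtail : δ ≤ tailD d N) :
    IsPmf (truncS d δ) := by
  constructor
  · exact truncS_nonneg hQ hd hδ0 hB hNtail
  · rw [tsum_eq_sum (s := Finset.Icc 1 N) ?h]
    · exact truncS_sum_N hQ hd hB hN2
    · intro x hx
      rw [Finset.mem_Icc] at hx
      rcases Nat.eq_zero_or_pos x with rfl | hx1
      · exact truncS_zero_val hQ hd hB hN2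
      · exact truncS_eq_zero_of_gt hB hN2 (by omega)

/-- The key initial-sum domination for part 1 (`δ > 0` case). -/
lemma truncS_sum_ge (hQ : IsPmf Q) (hd : IsDecRearr Q d) {R : ℕ → ℝ} (hR : IsPmf R)
    (hTV : tvDist Q R ≤ δ) (hB : truncB d δ = (N : ℕ∞)) (hN2 : 2 ≤ N) (k : ℕ) :
    topSum R k ≤ ∑ x ∈ Finset.Icc 1 k, truncS d δ x := by
  have hTV' : (1 / 2) * ∑' x, |Q x - R x| ≤ δ := hTV
  rcases Nat.eq_zero_or_pos k with rfl | hk1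
  · simp only [Finset.Icc_eq_empty_of_lt (by omega : (0:ℕ) < 1), Finset.sum_empty]
    rw [topSum_zero]
  rcases lt_or_ge k N with hkN | hkN
  · rw [truncS_sum_lt hB hk1 hkN, hd.2.2 k]
    exact topSum_R_le hQ hR hTV' k
  · have hsplit : ∑ x ∈ Finset.Icc 1 k, truncS d δ x = ∑ x ∈ Finset.Icc 1 N, truncS d δ x := by
      rcases eq_or_lt_of_le hkN with rfl | hlt
      · rfl
      · rw [← Finset.Ico_add_one_right_eq_Icc 1 k, ← Finset.Ico_add_one_right_eq_Icc 1 N,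
          ← Finset.sum_Ico_consecutive (truncS d δ) (by omega : 1 ≤ N + 1) (by omega : N + 1 ≤ k + 1)]
        have hz : ∑ x ∈ Finset.Ico (N + 1) (k + 1), truncS d δ x = 0 := by
          apply Finset.sum_eq_zero
          intro x hx
          rw [Finset.mem_Ico] at hx
          exact truncS_eq_zero_of_gt hB hN2 (by omega)
        rw [hz, add_zero]
    rw [hsplit, truncS_sum_N hQ hd hB hN2]
    exact topSum_le_one hR k

end Spos

end HY


namespace HY

lemma entE_shift {S : ℕ → ℝ} (hS0 : S 0 = 0) :
    ∑' j, ENNReal.ofReal (Real.negMulLog (S (j + 1))) = entE S := by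
  rw [entE]
  refine Function.Injective.tsum_eq (g := fun j => j + 1)
    (f := fun b => ENNReal.ofReal (Real.negMulLog (S b)))
    (fun a b h => Nat.succ_injective h) ?_
  intro x hx
  rcases Nat.eq_zero_or_pos x with rfl | hpos
  · exact absurd (by simp [hS0, Real.negMulLog_zero]) hx
  · exact ⟨x - 1, show x - 1 + 1 = x by omega⟩

lemma tsum_shift {S : ℕ → ℝ} (hS0 : S 0 = 0) : ∑' j, S (j + 1) = ∑' x, S x := by
  refine Function.Injective.tsum_eq (g := fun j => j + 1) (f := S)
    (fun a b h => Nat.succ_injective h) ?_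
  intro x hx
  rcases Nat.eq_zero_or_pos x with rfl | hpos
  · exact absurd hS0 hx
  · exact ⟨x - 1, show x - 1 + 1 = x by omega⟩

theorem stmt_11' (Q d : ℕ → ℝ) (δ : ℝ) (hQ : IsPmf Q) (hd : IsDecRearr Q d)
    (hδ0 : 0 ≤ δ) (hδ1 : δ ≤ 1 - d 1) :
    (∀ R : ℕ → ℝ, IsPmf R → tvDist Q R ≤ δ → entE (truncS d δ) ≤ entE R) ∧
    (∃ R : ℕ → ℝ, IsPmf R ∧ tvDist Q R ≤ δ ∧ entE R = entE (truncS d δ)) := by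
  classical
  have hQsum : Summable Q := pmf_summable hQ
  have hQ0 : ∀ x, 0 ≤ Q x := hQ.1
  set τ : ℕ → ℕ := tauQ Q hQsum hQ0 with hτdef
  have hτinj : Function.Injective τ := tau_inj
  have hτval : ∀ j, Q (τ j) = d (j + 1) := tau_val hQ hd hQsum hQ0
  have hτcov : ∀ x, x ∉ Set.range τ → Q x = 0 := tau_coverage hQ hd hQsum hQ0
  rcases eq_or_lt_of_le hδ0 with rfl | hδpos
  -- Case δ = 0
  · rw [truncS_zero hQ hd]
    have hdpmf : IsPmf d := ⟨d_nonneg hQ hd, tsum_d hQ hd⟩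
    constructor
    · intro R hR hTV
      apply entE_le_of_topSum_le hR hdpmf
      intro k
      rw [hd.2.2 k]
      have := topSum_R_le hQ hR hTV k
      linarith
    · refine ⟨Q, hQ, ?_, ?_⟩
      · rw [tvDist]
        simp
      · -- entE Q = entE d
        have h1 : ∑' j, ENNReal.ofReal (Real.negMulLog (Q (τ j))) = entE Q := by
          rw [entE]
          refine Function.Injective.tsum_eq
            (f := fun b => ENNReal.ofReal (Real.negMulLog (Q b))) hτinj ?_
          intro x hx
          by_contra hxr
          exact absurd (by simp [hτcov x hxr, Real.negMulLog_zero]) hx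
        rw [← h1, ← entE_shift hd.1]
        exact tsum_congr fun j => by rw [hτval j]
  -- Case δ > 0
  · obtain ⟨N, hN2, hNtail, hNs, hB⟩ := exists_N hQ hd hδpos hδ1
    have hSpmf : IsPmf (truncS d δ) := truncS_pmf hQ hd hδ0 hB hN2 hNtail
    have hS0 : truncS d δ 0 = 0 := truncS_zero_val hQ hd hB hN2
    constructor
    · intro R hR hTV
      exact entE_le_of_topSum_le hR hSpmf (truncS_sum_ge hQ hd hR hTV hB hN2)
    · -- Existence
      set S := truncS d δ with hSdef
      set R : ℕ → ℝ := fun x => if h : ∃ j, τ j = x then S (Classical.choose h + 1) else 0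
        with hRdef
      have hRτ : ∀ j, R (τ j) = S (j + 1) := by
        intro j
        have hex : ∃ j', τ j' = τ j := ⟨j, rfl⟩
        have hch : Classical.choose hex = j := hτinj (Classical.choose_spec hex)
        rw [hRdef]
        simp only [dif_pos hex, hch]
      have hRoff : ∀ x, x ∉ Set.range τ → R x = 0 := by
        intro x hx
        rw [hRdef]
        simp only
        rw [dif_neg]
        rintro ⟨j, hj⟩
        exact hx ⟨j, hj⟩
      have hRnn : ∀ x, 0 ≤ R x := by
        intro x
        by_cases h : ∃ j, τ j = x
        · obtain ⟨j, rfl⟩ := h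
          rw [hRτ j]; exact hSpmf.1 _
        · rw [hRdef]; simp only; rw [dif_neg h]
      have hRsum : ∑' x, R x = 1 := by
        have h1 : ∑' j, R (τ j) = ∑' x, R x := by
          refine Function.Injective.tsum_eq (f := R) hτinj ?_
          intro x hx
          by_contra hxr
          exact hx (hRoff x hxr)
        rw [← h1]
        have h2 : ∑' j, R (τ j) = ∑' j, S (j + 1) := tsum_congr fun j => hRτ j
        rw [h2, tsum_shift hS0, hSpmf.2]
      refine ⟨R, ⟨hRnn, hRsum⟩, ?_, ?_⟩
      · -- tvDist Q R ≤ δ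
        have habs : ∑' j, |Q (τ j) - R (τ j)| = ∑' x, |Q x - R x| := by
          refine Function.Injective.tsum_eq (f := fun x => |Q x - R x|) hτinj ?_
          intro x hx
          by_contra hxr
          exact absurd (show |Q x - R x| = 0 by rw [hτcov x hxr, hRoff x hxr]; simp) hx
        have hgval : ∀ j, |Q (τ j) - R (τ j)| = |d (j + 1) - S (j + 1)| :=
          fun j => by rw [hτval j, hRτ j]
        set g : ℕ → ℝ := fun j => |d (j + 1) - S (j + 1)| with hgdef
        have hgsum : Summable g := by
          apply Summable.of_nonneg_of_le (fun j => abs_nonneg _) (fun j => ?_)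
            (Summable.add ((summable_nat_add_iff 1).2 (d_summable hQ hd))
              ((summable_nat_add_iff 1).2 (pmf_summable hSpmf)))
          have h1 : 0 ≤ d (j + 1) := d_nonneg hQ hd _
          have h2 : 0 ≤ S (j + 1) := hSpmf.1 _
          calc |d (j + 1) - S (j + 1)| ≤ |d (j + 1)| + |S (j + 1)| := abs_sub _ _
            _ = d (j + 1) + S (j + 1) := by rw [abs_of_nonneg h1, abs_of_nonneg h2]
        have hsplit := Summable.sum_add_tsum_nat_add (N + 1) hgsum
        have htailpart : ∑' j, g (j + (N + 1)) = tailD d (N + 2) := by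
          have hterm : ∀ j, g (j + (N + 1)) = d (N + 2 + j) := by
            intro j
            rw [hgdef]
            simp only
            have hz : S (j + (N + 1) + 1) = 0 :=
              truncS_eq_zero_of_gt hB hN2 (by omega)
            rw [hz, sub_zero, abs_of_nonneg (d_nonneg hQ hd _)]
            congr 1
            omega
          exact tsum_congr hterm
        have hhead : ∑ j ∈ Finset.range (N + 1), g j
            = δ + (δ - tailD d (N + 1)) + d (N + 1) := by
          have hcong : ∀ j ∈ Finset.range (N + 1), g j =
              (if j = 0 then δ else 0) + (if j = N - 1 then δ - tailD d (N + 1) else 0)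
                + (if j = N then d (N + 1) else 0) := by
            intro j hj
            rw [Finset.mem_range] at hj
            rw [hgdef]; simp only
            rcases eq_or_ne j 0 with rfl | hj0
            · rw [if_pos rfl, if_neg (by omega), if_neg (by omega)]
              have hS1 : S 1 = d 1 + δ := by rw [hSdef, truncS_explicit hB, if_pos rfl]
              rw [hS1, show d (0 + 1) - (d 1 + δ) = -δ by ring, abs_neg,
                abs_of_nonneg (le_of_lt hδpos)]
              ring
            rcases eq_or_ne j (N - 1) with rfl | hjN1
            · rw [if_neg hj0, if_pos rfl, if_neg (by omega)]
              have hSN : S (N - 1 + 1) = tailD d N - δ := by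
                rw [hSdef, truncS_explicit hB, if_neg (by omega), if_neg (by omega),
                  if_pos (by omega)]
              rw [hSN]
              have ht := tail_succ hQ hd N
              have heq : d (N - 1 + 1) - (tailD d N - δ) = δ - tailD d (N + 1) := by
                have hde : d (N - 1 + 1) = d N := by congr 1; omega
                rw [hde, ht]; ring
              rw [heq, abs_of_nonneg (by linarith)]
              ring
            rcases eq_or_ne j N with hjN | hjN
            · rw [if_neg hj0, if_neg hjN1, if_pos hjN, hjN]
              have hz : S (N + 1) = 0 := truncS_eq_zero_of_gt hB hN2 (by omega)
              rw [hz, sub_zero, abs_of_nonneg (d_nonneg hQ hd _)]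
              ring
            · rw [if_neg hj0, if_neg hjN1, if_neg hjN]
              have hSd : S (j + 1) = d (j + 1) := by
                rw [hSdef, truncS_explicit hB, if_neg (by omega), if_pos (by omega)]
              rw [hSd, sub_self, abs_zero]
              ring
          rw [Finset.sum_congr rfl hcong, Finset.sum_add_distrib, Finset.sum_add_distrib,
            Finset.sum_ite_eq' _ 0 (fun _ => δ),
            Finset.sum_ite_eq' _ (N - 1) (fun _ => δ - tailD d (N + 1)),
            Finset.sum_ite_eq' _ N (fun _ => d (N + 1)),
            if_pos (Finset.mem_range.2 (by omega)), if_pos (Finset.mem_range.2 (by omega)),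
            if_pos (Finset.mem_range.2 (by omega))]
        rw [tvDist]
        have h0 : ∑' x, |Q x - R x| = ∑' j, g j := by
          rw [← habs]
          exact tsum_congr hgval
        have hT : ∑' x, |Q x - R x| = 2 * δ := by
          rw [h0, ← hsplit, hhead, htailpart, tail_succ hQ hd (N + 1)]
          ring
        rw [hT]
        linarith
      · -- entE R = entE S
        have h1 : ∑' j, ENNReal.ofReal (Real.negMulLog (R (τ j))) = entE R := by
          rw [entE]
          refine Function.Injective.tsum_eq
            (f := fun b => ENNReal.ofReal (Real.negMulLog (R b))) hτinj ?_
          intro x hx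
          by_contra hxr
          exact absurd (by simp [hRoff x hxr, Real.negMulLog_zero]) hx
        rw [← h1, ← entE_shift hS0]
        exact tsum_congr fun j => by rw [hRτ j]

end HY


/-- Ho–Yeung: the minimum of the Shannon entropy `H(R)` over all distributions
`R` with total variation distance `d(Q,R) ≤ δ` equals `H(S)`, with `S` as
above. -/
theorem stmt_11 (Q d : ℕ → ℝ) (δ : ℝ) (hQ : IsPmf Q) (hd : IsDecRearr Q d)
    (hδ0 : 0 ≤ δ) (hδ1 : δ ≤ 1 - d 1) :
    (∀ R : ℕ → ℝ, IsPmf R → tvDist Q R ≤ δ → entE (truncS d δ) ≤ entE R) ∧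
    (∃ R : ℕ → ℝ, IsPmf R ∧ tvDist Q R ≤ δ ∧ entE R = entE (truncS d δ)) := by
  exact HY.stmt_11' Q d δ hQ hd hδ0 hδ1
end
end

section
/- Let α > 1 and let (X_n, Y_n) be a sequence of pairs of random variables with X_n on a countably infinite alphabet, with list sizes L_n ≥ 1. If the minimum list decoding error probabilities satisfy P_e^{(L_n)}(X_n|Y_n) → 0 as n → ∞, then max{0, H_α^A(X_n|Y_n) − log L_n} → 0, where H_α^A is Arimoto's conditional Rényi entropy of order α. -/
noncomputable section
open Filter Topology

lemma IsPmf.summable {γ : Type*} {p : γ → ℝ} (hp : IsPmf p) : Summable p := by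
  by_contra h
  have := tsum_eq_zero_of_not_summable h
  rw [hp.2] at this
  norm_num at this

lemma IsPmf.le_one {γ : Type*} {p : γ → ℝ} (hp : IsPmf p) (x : γ) : p x ≤ 1 := by
  have := Summable.le_tsum hp.summable x (fun y _ => hp.1 y)
  rwa [hp.2] at this

lemma IsPmf.finsum_le_one {γ : Type*} {p : γ → ℝ} (hp : IsPmf p) (s : Finset γ) :
    ∑ x ∈ s, p x ≤ 1 := by
  have := Summable.sum_le_tsum s (fun x _ => hp.1 x) hp.summable
  rwa [hp.2] at this

lemma rpow_summable {p : ℕ → ℝ} (hp : IsPmf p) {α : ℝ} (hα : 1 ≤ α) :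
    Summable (fun x => p x ^ α) := by
  apply Summable.of_nonneg_of_le (fun x => Real.rpow_nonneg (hp.1 x) α) _ hp.summable
  intro x
  rcases eq_or_lt_of_le (hp.1 x) with h | h
  · rw [← h, Real.zero_rpow (by linarith : α ≠ 0)]
  · calc p x ^ α ≤ p x ^ (1:ℝ) :=
        Real.rpow_le_rpow_of_exponent_ge h (hp.le_one x) hα
      _ = p x := Real.rpow_one _

lemma topSum_nonneg {p : ℕ → ℝ} (hp : IsPmf p) (k : ℕ) : 0 ≤ topSum p k := by
  have hmem : (∑ x ∈ Finset.range k, p x) ∈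
      {t : ℝ | ∃ s : Finset ℕ, s.card = k ∧ t = ∑ x ∈ s, p x} :=
    ⟨Finset.range k, Finset.card_range k, rfl⟩
  have hbdd : BddAbove {t : ℝ | ∃ s : Finset ℕ, s.card = k ∧ t = ∑ x ∈ s, p x} := by
    refine ⟨1, ?_⟩
    rintro t ⟨s, _, rfl⟩
    exact hp.finsum_le_one s
  exact le_trans (Finset.sum_nonneg fun x _ => hp.1 x) (le_csSup hbdd hmem)

lemma topSum_le_one {p : ℕ → ℝ} (hp : IsPmf p) (k : ℕ) : topSum p k ≤ 1 := by
  apply Real.sSup_le _ zero_le_one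
  rintro t ⟨s, _, rfl⟩
  exact hp.finsum_le_one s

/-- Key pointwise inequality: `L^(1/α-1) * topSum p L ≤ (∑' x, p x ^ α) ^ (1/α)`. -/
lemma key_ineq {p : ℕ → ℝ} (hp : IsPmf p) {α : ℝ} (hα : 1 < α) {L : ℕ} (hL : 1 ≤ L) :
    (L : ℝ) ^ ((1:ℝ)/α - 1) * topSum p L ≤ (∑' x, p x ^ α) ^ ((1:ℝ)/α) := by
  set N : ℝ := (∑' x, p x ^ α) ^ ((1:ℝ)/α) with hN
  have hLpos : (0:ℝ) < L := by exact_mod_cast hL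
  have hNnonneg : 0 ≤ N := Real.rpow_nonneg (tsum_nonneg fun x => Real.rpow_nonneg (hp.1 x) α) _
  have htop : topSum p L ≤ (L : ℝ) ^ (1 - (1:ℝ)/α) * N := by
    apply Real.sSup_le _ (mul_nonneg (Real.rpow_nonneg hLpos.le _) hNnonneg)
    rintro t ⟨s, hs, rfl⟩
    -- power mean inequality with weights 1/L
    have hmean := Real.arith_mean_le_rpow_mean s (fun _ => (L:ℝ)⁻¹) p
      (fun i _ => by positivity) (by simp [hs, mul_inv_cancel₀ (ne_of_gt hLpos)])
      (fun i _ => hp.1 i) hα.le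
    rw [← Finset.mul_sum] at hmean
    have hsum_le : ∑ i ∈ s, (L:ℝ)⁻¹ * p i ^ α ≤ (L:ℝ)⁻¹ * ∑' x, p x ^ α := by
      rw [← Finset.mul_sum]
      apply mul_le_mul_of_nonneg_left _ (by positivity)
      exact Summable.sum_le_tsum s (fun x _ => Real.rpow_nonneg (hp.1 x) α) (rpow_summable hp hα.le)
    have h2 : ((L:ℝ)⁻¹ * ∑ i ∈ s, p i) ≤ ((L:ℝ)⁻¹ * ∑' x, p x ^ α) ^ ((1:ℝ)/α) := by
      refine le_trans hmean ?_
      exact Real.rpow_le_rpow (Finset.sum_nonneg fun i _ =>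
        mul_nonneg (by positivity) (Real.rpow_nonneg (hp.1 i) α)) hsum_le (by positivity)
    have h3 : ((L:ℝ)⁻¹ * ∑' x, p x ^ α) ^ ((1:ℝ)/α)
        = (L:ℝ) ^ (-(1:ℝ)/α) * N := by
      rw [Real.mul_rpow (by positivity)
        (tsum_nonneg fun x => Real.rpow_nonneg (hp.1 x) α),
        Real.inv_rpow hLpos.le, ← Real.rpow_neg hLpos.le, neg_div, hN]
    rw [h3] at h2
    calc ∑ i ∈ s, p i = (L:ℝ) * ((L:ℝ)⁻¹ * ∑ i ∈ s, p i) := by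
          field_simp
      _ ≤ (L:ℝ) * ((L:ℝ) ^ (-(1:ℝ)/α) * N) := by
          exact mul_le_mul_of_nonneg_left h2 hLpos.le
      _ = (L:ℝ) ^ (1 - (1:ℝ)/α) * N := by
          rw [← mul_assoc]
          congr 1
          rw [show (1 - (1:ℝ)/α) = 1 + (-(1:ℝ)/α) by ring, Real.rpow_add hLpos,
            Real.rpow_one]
  calc (L : ℝ) ^ ((1:ℝ)/α - 1) * topSum p L
      ≤ (L : ℝ) ^ ((1:ℝ)/α - 1) * ((L : ℝ) ^ (1 - (1:ℝ)/α) * N) :=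
        mul_le_mul_of_nonneg_left htop (Real.rpow_nonneg hLpos.le _)
    _ = N := by
        rw [← mul_assoc, ← Real.rpow_add hLpos]
        norm_num

/-- For any order `α > 1`, vanishing list decoding error probability implies
vanishing Rényi equivocation: `P_e^{(L_n)}(X_n|Y_n) → 0` implies
`max{0, H_α^A(X_n|Y_n) − log L_n} → 0`. -/
theorem stmt_12 (α : ℝ) (hα : 1 < α) (L : ℕ → ℕ) (hL : ∀ n, 1 ≤ L n)
    (β : ℕ → Type) (q : ∀ n, β n → ℝ) (W : ∀ n, β n → ℕ → ℝ)
    (hq : ∀ n, IsPmf (q n)) (hW : ∀ n y, IsPmf (W n y))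
    (hPe : Tendsto (fun n => 1 - ∑' y, q n y * topSum (W n y) (L n)) atTop (𝓝 0)) :
    Tendsto (fun n => max 0 (arimoto α (q n) (W n) - Real.log (L n))) atTop (𝓝 0) := by
  -- notation
  set S : ℕ → ℝ := fun n => ∑' y, q n y * topSum (W n y) (L n) with hS
  have hαne : (1:ℝ) - α ≠ 0 := by linarith
  have hcoef_neg : α / (1 - α) < 0 := div_neg_of_pos_of_neg (by linarith) (by linarith)
  -- S n → 1
  have hStend : Tendsto S atTop (𝓝 1) := by
    have := hPe.const_sub 1
    simpa using this
  -- S n ≤ 1 for all n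
  have hSle : ∀ n, S n ≤ 1 := by
    intro n
    have h1 : ∀ y, q n y * topSum (W n y) (L n) ≤ q n y := fun y =>
      mul_le_of_le_one_right ((hq n).1 y) (topSum_le_one (hW n y) _)
    have hsum1 : Summable (fun y => q n y * topSum (W n y) (L n)) :=
      Summable.of_nonneg_of_le
        (fun y => mul_nonneg ((hq n).1 y) (topSum_nonneg (hW n y) _)) h1 (hq n).summable
    have := Summable.tsum_le_tsum h1 hsum1 (hq n).summable
    rwa [(hq n).2] at this
  have hSnonneg : ∀ n, 0 ≤ S n := fun n =>
    tsum_nonneg fun y => mul_nonneg ((hq n).1 y) (topSum_nonneg (hW n y) _)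
  -- the dominating sequence
  set c : ℕ → ℝ := fun n => (α / (1 - α)) * Real.log (S n) with hc
  have hctend : Tendsto c atTop (𝓝 0) := by
    have hlog : Tendsto (fun n => Real.log (S n)) atTop (𝓝 0) := by
      have := (Real.continuousAt_log one_ne_zero).tendsto.comp hStend
      simpa [Function.comp_def] using this
    have := hlog.const_mul (α / (1 - α))
    simpa using this
  -- eventually S n ≥ 1/2
  have hev : ∀ᶠ n in atTop, (1:ℝ)/2 ≤ S n := by
    exact hStend.eventually (eventually_ge_nhds (by norm_num))
  -- main bound, for n with S n > 0
  have hbound : ∀ n, 0 < S n → max 0 (arimoto α (q n) (W n) - Real.log (L n)) ≤ c n := by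
    intro n hSpos
    have hLpos : (0:ℝ) < (L n : ℝ) := by exact_mod_cast hL n
    -- E := argument of the log in arimoto
    set E : ℝ := ∑' y, q n y * (∑' x, W n y x ^ α) ^ ((1:ℝ)/α) with hE
    -- lower bound for E
    have hElb : (L n : ℝ) ^ ((1:ℝ)/α - 1) * S n ≤ E := by
      have hpt : ∀ y, q n y * ((L n : ℝ) ^ ((1:ℝ)/α - 1) * topSum (W n y) (L n))
          ≤ q n y * (∑' x, W n y x ^ α) ^ ((1:ℝ)/α) := fun y =>
        mul_le_mul_of_nonneg_left (key_ineq (hW n y) hα (hL n)) ((hq n).1 y)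
      have hub : ∀ y, q n y * (∑' x, W n y x ^ α) ^ ((1:ℝ)/α) ≤ q n y := by
        intro y
        apply mul_le_of_le_one_right ((hq n).1 y)
        apply Real.rpow_le_one
          (tsum_nonneg fun x => Real.rpow_nonneg ((hW n y).1 x) α) _ (by positivity)
        have h1 : ∀ x, W n y x ^ α ≤ W n y x := by
          intro x
          rcases eq_or_lt_of_le ((hW n y).1 x) with h | h
          · rw [← h, Real.zero_rpow (by linarith : α ≠ 0)]
          · calc W n y x ^ α ≤ W n y x ^ (1:ℝ) :=
                Real.rpow_le_rpow_of_exponent_ge h ((hW n y).le_one x) hα.le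
              _ = W n y x := Real.rpow_one _
        have := Summable.tsum_le_tsum h1 (rpow_summable (hW n y) hα.le) (hW n y).summable
        rwa [(hW n y).2] at this
      have hs1 : Summable (fun y => q n y * ((L n : ℝ) ^ ((1:ℝ)/α - 1) * topSum (W n y) (L n))) := by
        apply Summable.of_nonneg_of_le
          (fun y => mul_nonneg ((hq n).1 y)
            (mul_nonneg (Real.rpow_nonneg hLpos.le _) (topSum_nonneg (hW n y) _)))
          (fun y => le_trans (hpt y) (hub y)) (hq n).summable
      have hs2 : Summable (fun y => q n y * (∑' x, W n y x ^ α) ^ ((1:ℝ)/α)) := by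
        apply Summable.of_nonneg_of_le
          (fun y => mul_nonneg ((hq n).1 y)
            (Real.rpow_nonneg (tsum_nonneg fun x => Real.rpow_nonneg ((hW n y).1 x) α) _))
          hub (hq n).summable
      have := Summable.tsum_le_tsum hpt hs1 hs2
      calc (L n : ℝ) ^ ((1:ℝ)/α - 1) * S n
          = ∑' y, q n y * ((L n : ℝ) ^ ((1:ℝ)/α - 1) * topSum (W n y) (L n)) := by
            rw [hS]
            rw [← tsum_mul_left]
            congr 1
            funext y
            ring
        _ ≤ E := this
    have hEpos : 0 < E := lt_of_lt_of_le (by positivity) hElb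
    -- log bound
    have hlogE : ((1:ℝ)/α - 1) * Real.log (L n) + Real.log (S n) ≤ Real.log E := by
      calc ((1:ℝ)/α - 1) * Real.log (L n) + Real.log (S n)
          = Real.log ((L n : ℝ) ^ ((1:ℝ)/α - 1) * S n) := by
            rw [Real.log_mul (by positivity) (ne_of_gt hSpos), Real.log_rpow hLpos]
        _ ≤ Real.log E := Real.log_le_log (by positivity) hElb
    -- arimoto bound
    have hH : arimoto α (q n) (W n) - Real.log (L n) ≤ c n := by
      have h1 : arimoto α (q n) (W n) = (α / (1 - α)) * Real.log E := rfl
      have h2 : (α / (1 - α)) * Real.log E ≤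
          (α / (1 - α)) * (((1:ℝ)/α - 1) * Real.log (L n) + Real.log (S n)) :=
        mul_le_mul_of_nonpos_left hlogE hcoef_neg.le
      have h3 : (α / (1 - α)) * (((1:ℝ)/α - 1) * Real.log (L n) + Real.log (S n))
          = Real.log (L n) + c n := by
        rw [hc]
        have hα0 : α ≠ 0 := by linarith
        field_simp
      rw [h1]
      linarith [h2, h3 ▸ h2]
    -- c n ≥ 0
    have hcnn : 0 ≤ c n := by
      have hlog := Real.log_nonpos hSpos.le (hSle n)
      have : 0 ≤ (-(α / (1 - α))) * (-(Real.log (S n))) :=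
        mul_nonneg (by linarith) (by linarith)
      simpa [hc] using this.trans_eq (by ring)
    exact max_le hcnn hH
  -- squeeze
  apply tendsto_of_tendsto_of_tendsto_of_le_of_le' tendsto_const_nhds hctend
  · exact Eventually.of_forall fun n => le_max_left _ _
  · filter_upwards [hev] with n hn
    exact hbound n (by linarith)
end
end

section
/- Fix a list size L ≥ 1 and a real γ > 0. There exists a sequence of probability distributions P_n on the countably infinite alphabet X = {1,2,...} such that the list-decoding error without side information P_e^{(L)}(P_n) = 1 − ∑_{x=1}^L P_n↓(x) tends to 0, yet H(P_n) converges to γ + log L; in particular, taking X_n ~ P_n independent of any Y_n, the error probability P_e^{(L)}(X_n|Y_n) vanishes while H(X_n|Y_n) − log L does not vanish relative to H(X_n). Concretely, with δ_n → 0, δ_n ∈ (0,1), and p_n chosen so that δ_n h₂(p_n)/p_n = γ and 0 < p_n ≤ min{1, (1−δ_n)/(δ_n L)}, the distribution P_n(x) = (1−δ_n)/L for 1 ≤ x ≤ L and P_n(x) = δ_n p_n (1−p_n)^{x−L−1} for x ≥ L+1 satisfies P_e^{(L)}(P_n) = δ_n and H(P_n) = h₂(δ_n) + (1−δ_n) log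 L + δ_n h₂(p_n)/p_n. -/
noncomputable section
open Filter Topology

/-- Shannon entropy (natural logarithm). -/
def shEnt (p : ℕ → ℝ) : ℝ := ∑' x, Real.negMulLog (p x)

/-- Binary entropy function. -/
def binEnt (u : ℝ) : ℝ := Real.negMulLog u + Real.negMulLog (1 - u)

def fAux (L : ℕ) (d q : ℝ) (x : ℕ) : ℝ :=
  if x = 0 then 0 else if x ≤ L then (1 - d) / L else d * q * (1 - q) ^ (x - L - 1)

variable {L : ℕ} {d q : ℝ}

lemma fAux_tail (x : ℕ) : fAux L d q (x + (L+1)) = d * q * (1 - q) ^ x := by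
  have h1 : ¬ (x + (L+1) = 0) := by omega
  have h2 : ¬ (x + (L+1) ≤ L) := by omega
  have h3 : x + (L+1) - L - 1 = x := by omega
  simp [fAux, h1, h2, h3]

lemma fAux_head (hL : 1 ≤ L) :
    ∑ x ∈ Finset.range (L+1), fAux L d q x = 1 - d := by
  rw [Finset.sum_range_succ']
  have : ∀ i ∈ Finset.range L, fAux L d q (i+1) = (1-d)/L := by
    intro i hi
    simp only [Finset.mem_range] at hi
    have h1 : ¬ (i + 1 = 0) := by omega
    have h2 : i + 1 ≤ L := by omega
    simp [fAux, h1, h2]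
  rw [Finset.sum_congr rfl this, Finset.sum_const, Finset.card_range]
  have hL0 : (L:ℝ) ≠ 0 := by positivity
  simp [fAux]
  field_simp

lemma fAux_nonneg (hd1 : d ≤ 1) (hd0 : 0 ≤ d) (hq0 : 0 ≤ q) (hq1 : q ≤ 1) (x : ℕ) :
    0 ≤ fAux L d q x := by
  unfold fAux
  split_ifs with h1 h2
  · exact le_rfl
  · have : (0:ℝ) ≤ 1 - d := by linarith
    positivity
  · have : (0:ℝ) ≤ 1 - q := by linarith
    positivity

lemma fAux_summable (hq0 : 0 < q) (hq1 : q < 1) : Summable (fAux L d q) := by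
  rw [← summable_nat_add_iff (L+1)]
  simp only [fAux_tail]
  apply Summable.mul_left
  exact summable_geometric_of_lt_one (by linarith) (by linarith)

lemma fAux_tsum (hL : 1 ≤ L) (hq0 : 0 < q) (hq1 : q < 1) :
    ∑' x, fAux L d q x = 1 := by
  rw [← Summable.sum_add_tsum_nat_add (L+1) (fAux_summable hq0 hq1), fAux_head hL]
  simp only [fAux_tail]
  rw [tsum_mul_left, tsum_geometric_of_lt_one (by linarith) (by linarith)]
  have : (1 - (1-q))⁻¹ = q⁻¹ := by ring_nf
  rw [this]
  field_simp
  ring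

lemma fAux_le (hd0 : 0 < d) (hd1 : d < 1) (hq0 : 0 < q) (hq1 : q < 1)
    (hqd : d * q ≤ (1-d)/L) (x : ℕ) : fAux L d q x ≤ (1-d)/L := by
  unfold fAux
  split_ifs with h1 h2
  · have : (0:ℝ) ≤ 1 - d := by linarith
    positivity
  · exact le_rfl
  · have hr : (0:ℝ) ≤ 1 - q := by linarith
    have : (1-q) ^ (x - L - 1) ≤ 1 := pow_le_one₀ hr (by linarith)
    calc d * q * (1-q) ^ (x-L-1) ≤ d * q * 1 := by
          apply mul_le_mul_of_nonneg_left this (by positivity)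
      _ = d * q := mul_one _
      _ ≤ (1-d)/L := hqd

lemma fAux_topSum (hL : 1 ≤ L) (hd0 : 0 < d) (hd1 : d < 1) (hq0 : 0 < q) (hq1 : q < 1)
    (hqd : d * q ≤ (1-d)/L) : topSum (fAux L d q) L = 1 - d := by
  have hL0 : (L:ℝ) ≠ 0 := by positivity
  apply IsGreatest.csSup_eq
  constructor
  · refine ⟨Finset.Icc 1 L, by simp, ?_⟩
    have : ∀ x ∈ Finset.Icc 1 L, fAux L d q x = (1-d)/L := by
      intro x hx
      simp only [Finset.mem_Icc] at hx
      have h1 : ¬ (x = 0) := by omega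
      simp [fAux, h1, hx.2]
    rw [Finset.sum_congr rfl this, Finset.sum_const]
    simp
    field_simp
  · rintro t ⟨s, hs, rfl⟩
    calc ∑ x ∈ s, fAux L d q x ≤ ∑ x ∈ s, (1-d)/L :=
          Finset.sum_le_sum fun x _ => fAux_le hd0 hd1 hq0 hq1 hqd x
      _ = L * ((1-d)/L) := by rw [Finset.sum_const, hs]; ring
      _ = 1 - d := by field_simp

lemma fAux_entropy (hL : 1 ≤ L) (hd0 : 0 < d) (hd1 : d < 1) (hq0 : 0 < q) (hq1 : q < 1) :
    shEnt (fAux L d q) = binEnt d + (1-d) * Real.log L + d * binEnt q / q := by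
  have hL0 : (L:ℝ) ≠ 0 := by positivity
  have hr0 : (0:ℝ) < 1 - q := by linarith
  have hrn : ‖(1-q : ℝ)‖ < 1 := by rw [Real.norm_eq_abs, abs_lt]; constructor <;> linarith
  have key : ∀ x:ℕ, Real.negMulLog (d*q*(1-q)^x) =
      (-Real.log (d*q)) * (d*q*(1-q)^x) + ((-Real.log (1-q)) * (d*q)) * ((x:ℝ) * (1-q)^x) := by
    intro x
    rw [Real.negMulLog, Real.log_mul (by positivity) (by positivity), Real.log_pow]
    ring
  have hsum1 : Summable (fun x:ℕ => (-Real.log (d*q)) * (d*q*(1-q)^x)) :=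
    (((summable_geometric_of_lt_one hr0.le (by linarith)).mul_left _).mul_left _)
  have hsum2 : Summable (fun x:ℕ => ((-Real.log (1-q)) * (d*q)) * ((x:ℝ) * (1-q)^x)) := by
    apply Summable.mul_left
    have := summable_pow_mul_geometric_of_norm_lt_one 1 hrn (R := ℝ)
    simpa using this
  have hsumg : Summable (fun x => Real.negMulLog (fAux L d q (x + (L+1)))) := by
    simp only [fAux_tail]
    exact (hsum1.add hsum2).congr fun x => (key x).symm
  have hsumG : Summable (fun x => Real.negMulLog (fAux L d q x)) :=
    (summable_nat_add_iff (L+1)).mp hsumg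
  have hgeo : ∑' x:ℕ, (1-q)^x = q⁻¹ := by
    rw [tsum_geometric_of_lt_one hr0.le (by linarith)]; ring_nf
  have hxgeo : ∑' x:ℕ, (x:ℝ) * (1-q)^x = (1-q)/q^2 := by
    rw [tsum_coe_mul_geometric_of_norm_lt_one hrn]; ring_nf
  have htail : ∑' x:ℕ, Real.negMulLog (fAux L d q (x + (L+1)))
      = (-Real.log (d*q)) * (d*q*q⁻¹) + ((-Real.log (1-q)) * (d*q)) * ((1-q)/q^2) := by
    simp only [fAux_tail]
    rw [tsum_congr key, Summable.tsum_add hsum1 hsum2, tsum_mul_left, tsum_mul_left, tsum_mul_left,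
      hgeo, hxgeo]
  have hhead : ∑ x ∈ Finset.range (L+1), Real.negMulLog (fAux L d q x)
      = L * Real.negMulLog ((1-d)/L) := by
    rw [Finset.sum_range_succ']
    have : ∀ i ∈ Finset.range L, Real.negMulLog (fAux L d q (i+1)) = Real.negMulLog ((1-d)/L) := by
      intro i hi
      simp only [Finset.mem_range] at hi
      have h1 : ¬ (i + 1 = 0) := by omega
      simp [fAux, h1, Nat.succ_le_of_lt hi]
    rw [Finset.sum_congr rfl this, Finset.sum_const, Finset.card_range]
    simp [fAux, Real.negMulLog_zero]
  have := Summable.sum_add_tsum_nat_add (L+1) hsumG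
  rw [shEnt, ← this, hhead, htail]
  have e1 : Real.log ((1-d)/L) = Real.log (1-d) - Real.log L :=
    Real.log_div (by linarith) hL0
  have e2 : Real.log (d*q) = Real.log d + Real.log q := Real.log_mul hd0.ne' hq0.ne'
  simp only [Real.negMulLog, binEnt, e1, e2]
  field_simp
  ring


/-- A counterexample source (Example 4): for fixed list size `L` and `γ > 0`,
the distributions `P_n` (uniform mass `(1−δ_n)/L` on `{1,…,L}` plus a geometric
tail) have vanishing list decoding error `P_e^{(L)}(P_n) = δ_n → 0`, yet
`H(P_n) = h₂(δ_n) + (1−δ_n) log L + δ_n h₂(p_n)/p_n → γ + log L`. -/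
theorem stmt_14 (L : ℕ) (hL : 1 ≤ L) (γ : ℝ) (hγ : 0 < γ)
    (δ p : ℕ → ℝ)
    (hδ0 : ∀ n, 0 < δ n) (hδ1 : ∀ n, δ n < 1)
    (hδlim : Tendsto δ atTop (𝓝 0))
    (hp0 : ∀ n, 0 < p n)
    (hp1 : ∀ n, p n ≤ min 1 ((1 - δ n) / (δ n * L)))
    (hγeq : ∀ n, δ n * binEnt (p n) / p n = γ) :
    let P : ℕ → ℕ → ℝ := fun n x =>
      if x = 0 then 0
      else if x ≤ L then (1 - δ n) / L
      else δ n * p n * (1 - p n) ^ (x - L - 1)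
    (∀ n, IsPmf (P n)) ∧
    (∀ n, 1 - topSum (P n) L = δ n) ∧
    (∀ n, shEnt (P n) =
      binEnt (δ n) + (1 - δ n) * Real.log L + δ n * binEnt (p n) / p n) ∧
    Tendsto (fun n => shEnt (P n)) atTop (𝓝 (γ + Real.log L)) ∧
    Tendsto (fun n => 1 - topSum (P n) L) atTop (𝓝 0) := by
  intro P
  have hPf : ∀ n, P n = fAux L (δ n) (p n) := fun n => rfl
  have hq1 : ∀ n, p n < 1 := by
    intro n
    rcases lt_or_eq_of_le ((hp1 n).trans (min_le_left _ _)) with h | h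
    · exact h
    · exfalso
      have h2 := hγeq n
      rw [h] at h2
      simp [binEnt, Real.negMulLog_zero, Real.negMulLog_one] at h2
      linarith
  have hqd : ∀ n, δ n * p n ≤ (1 - δ n) / L := by
    intro n
    have h1 : p n ≤ (1 - δ n) / (δ n * L) := (hp1 n).trans (min_le_right _ _)
    have hL0 : (0:ℝ) < L := by exact_mod_cast Nat.pos_of_ne_zero (by omega)
    have h2 : δ n * p n ≤ δ n * ((1 - δ n) / (δ n * L)) :=
      mul_le_mul_of_nonneg_left h1 (hδ0 n).le
    have h3 : δ n * ((1 - δ n) / (δ n * L)) = (1 - δ n) / L := by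
      have h4 : δ n ≠ 0 := (hδ0 n).ne'
      have h5 : (L:ℝ) ≠ 0 := hL0.ne'
      field_simp
    linarith
  have hTop : ∀ n, 1 - topSum (P n) L = δ n := by
    intro n
    rw [hPf n, fAux_topSum hL (hδ0 n) (hδ1 n) (hp0 n) (hq1 n) (hqd n)]
    ring
  have hEnt : ∀ n, shEnt (P n) =
      binEnt (δ n) + (1 - δ n) * Real.log L + δ n * binEnt (p n) / p n := by
    intro n
    rw [hPf n, fAux_entropy hL (hδ0 n) (hδ1 n) (hp0 n) (hq1 n)]
  refine ⟨?_, hTop, hEnt, ?_, ?_⟩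
  · intro n
    refine ⟨?_, ?_⟩
    · intro x
      rw [hPf n]
      exact fAux_nonneg (hδ1 n).le (hδ0 n).le (hp0 n).le (hq1 n).le x
    · rw [hPf n]
      exact fAux_tsum hL (hp0 n) (hq1 n)
  · have hc : Continuous binEnt :=
      Real.continuous_negMulLog.add
        (Real.continuous_negMulLog.comp (continuous_const.sub continuous_id))
    have h0 : binEnt 0 = 0 := by
      simp [binEnt, Real.negMulLog_zero, Real.negMulLog_one]
    have key : Tendsto (fun n => binEnt (δ n) + (1 - δ n) * Real.log L + γ) atTop
        (𝓝 (binEnt 0 + (1 - 0) * Real.log L + γ)) := by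
      exact ((hc.continuousAt.tendsto.comp hδlim).add
        ((tendsto_const_nhds.sub hδlim).mul tendsto_const_nhds)).add tendsto_const_nhds
    have heq : (fun n => shEnt (P n)) = fun n =>
        binEnt (δ n) + (1 - δ n) * Real.log L + γ := by
      funext n
      rw [hEnt n, hγeq n]
    rw [heq]
    convert key using 2
    rw [h0]
    ring
  · have heq : (fun n => 1 - topSum (P n) L) = δ := funext hTop
    rw [heq]
    exact hδlim
end
end
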